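/- arXiv:1603.08706 — 10 statements merged into one kernel-verified Lean document; each statement's English description precedes it below -/
import Mathlib

section
/- Let X be a real Banach space, let A ⊆ X be a bounded set, let N ∈ ℕ, and let D ∈ Δ_N(A) be the symmetrized set of A with respect to points x₁,…,x_N ∈ A. If d ∈ D, then the set (D − d) ∩ (d − D) is the symmetrized set of A with respect to the 2N points x₁+d, x₁−d, …, x_N+d, x_N−d (all of which belong to A); in particular (D − d) ∩ (d − D) ∈ Δ_{2N}(A). -/
open Set Metric Bornology

variable {X : Type*} [NormedAddCommGroup X] [NormedSpace ℝ X] [CompleteSpace X]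

/-- The set `(A - x) ∩ (x - A) = {d | x + d ∈ A ∧ x - d ∈ A}`. -/
def symmAt (A : Set X) (x : X) : Set X := {d | x + d ∈ A ∧ x - d ∈ A}

/-- The symmetrized set of `A` with respect to a family of points:
`⋂ i, (A - x i) ∩ (x i - A)`. -/
def symmSet {ι : Type*} (A : Set X) (x : ι → X) : Set X := ⋂ i, symmAt A (x i)

/-- `Δ_N(A)`: the family of all symmetrized sets of `A` with respect to `N` points of `A`. -/
def DeltaFam (A : Set X) (N : ℕ) : Set (Set X) :=
  {D | ∃ x : Fin N → X, (∀ n, x n ∈ A) ∧ D = symmSet A x}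

/-- `δ₀(A) = diam(A)/2`. -/
noncomputable def delta0 (A : Set X) : ℝ := diam A / 2

/-- `δ_N(A) = inf{δ₀(D) : D ∈ Δ_N(A)}`. -/
noncomputable def deltaN (A : Set X) (N : ℕ) : ℝ := sInf (delta0 '' DeltaFam A N)

/-- `δ_∞(A) = lim_N δ_N(A)`, which equals the infimum since the sequence is
decreasing and bounded below. -/
noncomputable def deltaInf (A : Set X) : ℝ := ⨅ N : ℕ, deltaN A (N + 1)

/-- if `D ∈ Δ_N(A)` is the symmetrized set of `A` with respect to
`x₁, …, x_N ∈ A` and `d ∈ D`, then `(D - d) ∩ (d - D)` is the symmetrized set of `A` with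
respect to the `2N` points `x₁ + d, x₁ - d, …, x_N + d, x_N - d` (all in `A`); in particular
`(D - d) ∩ (d - D) ∈ Δ_{2N}(A)`. -/
theorem stmt0 (A : Set X) (hA : IsBounded A) (N : ℕ) (hN : 0 < N)
    (x : Fin N → X) (hx : ∀ n, x n ∈ A) (d : X) (hd : d ∈ symmSet A x) :
    (∀ n, x n + d ∈ A ∧ x n - d ∈ A) ∧
    symmAt (symmSet A x) d
      = symmSet A (Sum.elim (fun n : Fin N => x n + d) (fun n : Fin N => x n - d)) ∧
    symmAt (symmSet A x) d ∈ DeltaFam A (2 * N) := by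
  simp only [symmSet, mem_iInter, symmAt, mem_setOf_eq] at hd
  have hmem : ∀ n, x n + d ∈ A ∧ x n - d ∈ A := fun n => hd n
  have heq : symmAt (symmSet A x) d
      = symmSet A (Sum.elim (fun n : Fin N => x n + d) (fun n : Fin N => x n - d)) := by
    ext e
    simp only [symmAt, symmSet, mem_setOf_eq, mem_iInter, Sum.forall, Sum.elim_inl,
      Sum.elim_inr]
    have E1 : ∀ n : Fin N, x n + d + e = x n + (d + e) := fun n => by abel
    have E2 : ∀ n : Fin N, x n + d - e = x n + (d - e) := fun n => by abel
    have E3 : ∀ n : Fin N, x n - d + e = x n - (d - e) := fun n => by abel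
    have E4 : ∀ n : Fin N, x n - d - e = x n - (d + e) := fun n => by abel
    constructor
    · rintro ⟨h1, h2⟩
      refine ⟨fun n => ⟨?_, ?_⟩, fun n => ⟨?_, ?_⟩⟩
      · rw [E1]; exact (h1 n).1
      · rw [E2]; exact (h2 n).1
      · rw [E3]; exact (h2 n).2
      · rw [E4]; exact (h1 n).2
    · rintro ⟨h1, h2⟩
      refine ⟨fun n => ⟨?_, ?_⟩, fun n => ⟨?_, ?_⟩⟩
      · rw [← E1]; exact (h1 n).1
      · rw [← E4]; exact (h2 n).2
      · rw [← E2]; exact (h1 n).2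
      · rw [← E3]; exact (h2 n).1
  refine ⟨hmem, heq, ?_⟩
  set f : Fin N ⊕ Fin N → X := Sum.elim (fun n : Fin N => x n + d) (fun n : Fin N => x n - d)
    with hf
  have e2 : Fin (2 * N) ≃ Fin N ⊕ Fin N :=
    (finCongr (two_mul N)).trans finSumFinEquiv.symm
  refine ⟨f ∘ e2, ?_, ?_⟩
  · intro n
    rcases h : e2 n with m | m <;> simp only [Function.comp_apply, h, hf, Sum.elim_inl,
      Sum.elim_inr]
    · exact (hmem m).1
    · exact (hmem m).2
  · rw [heq]
    simp only [symmSet, Function.comp]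
    exact (e2.surjective.iInter_comp fun i => symmAt A (f i)).symm
end

section
/- Let X be a real Banach space, A ⊆ X a bounded set, and N ∈ ℕ. If D ∈ Δ_N(A), then the Kuratowski measure of non-compactness of D satisfies α(D) ≥ δ_{2N}(A). -/
open Set Metric Bornology

variable {X : Type*} [NormedAddCommGroup X] [NormedSpace ℝ X] [CompleteSpace X]

/-- The Kuratowski measure of non-compactness:
`α(S) = inf{ε > 0 : S is covered by finitely many balls of radius ε}`. -/
noncomputable def kuratowski (S : Set X) : ℝ :=
  sInf {ε : ℝ | 0 < ε ∧ ∃ t : Finset X, S ⊆ ⋃ c ∈ t, closedBall c ε}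


/-- Iterated midpoint sets: each stage consists of midpoints of pairs of the previous
stage that are more than `2γ` apart. -/
def midSets {E : Type*} [NormedAddCommGroup E] [NormedSpace ℝ E] (γ : ℝ) (S : Set E) :
    ℕ → Set E
  | 0 => S
  | T + 1 => {z | ∃ u v, u ∈ midSets γ S T ∧ v ∈ midSets γ S T ∧ 2 * γ < ‖u - v‖ ∧
      z = (2⁻¹ : ℝ) • (u + v)}


lemma midSets_potential {E F : Type*} [NormedAddCommGroup E] [NormedSpace ℝ E]
    [NormedAddCommGroup F] [InnerProductSpace ℝ F] (L : E →L[ℝ] F) {C : ℝ} (hC0 : 0 < C)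
    (hwC : ∀ w : E, ‖w‖ ≤ C * ‖L w‖) {γ : ℝ} (hγ : 0 < γ) (S : Set E) :
    ∀ T : ℕ, ∀ z ∈ midSets γ S T, ∃ z₀ ∈ S, ‖L z‖ ^ 2 + T * ((γ / C) ^ 2) ≤ ‖L z₀‖ ^ 2 := by
  intro T
  induction T with
  | zero => intro z hz; exact ⟨z, hz, by simp⟩
  | succ T ih =>
    rintro z ⟨u, v, hu, hv, hsep, rfl⟩
    have ha : (2⁻¹:ℝ) • (u + v) + (2⁻¹:ℝ) • (u - v) = u := by
      rw [← smul_add]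
      have h5 : (u + v) + (u - v) = (2:ℝ) • u := by rw [two_smul]; abel
      rw [h5, smul_smul]; norm_num
    have hb : (2⁻¹:ℝ) • (u + v) - (2⁻¹:ℝ) • (u - v) = v := by
      rw [← smul_sub]
      have h5 : (u + v) - (u - v) = (2:ℝ) • v := by rw [two_smul]; abel
      rw [h5, smul_smul]; norm_num
    have hplaw := parallelogram_law_with_norm ℝ (L ((2⁻¹:ℝ) • (u + v)))
      (L ((2⁻¹:ℝ) • (u - v)))
    rw [← map_add, ← map_sub, ha, hb] at hplaw
    have hwlow : γ / C < ‖L ((2⁻¹:ℝ) • (u - v))‖ := by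
      have h1 : ‖(2⁻¹:ℝ) • (u - v)‖ = 2⁻¹ * ‖u - v‖ := by
        rw [norm_smul]; norm_num
      have h2 : γ < ‖(2⁻¹:ℝ) • (u - v)‖ := by rw [h1]; linarith
      have h3 := hwC ((2⁻¹:ℝ) • (u - v))
      rw [div_lt_iff₀ hC0]
      calc γ < ‖(2⁻¹:ℝ) • (u - v)‖ := h2
        _ ≤ C * ‖L ((2⁻¹:ℝ) • (u - v))‖ := h3
        _ = ‖L ((2⁻¹:ℝ) • (u - v))‖ * C := mul_comm _ _
    have hwsq : (γ / C) ^ 2 < ‖L ((2⁻¹:ℝ) • (u - v))‖ ^ 2 :=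
      pow_lt_pow_left₀ hwlow (by positivity) two_ne_zero
    rcases le_total (‖L u‖ ^ 2) (‖L v‖ ^ 2) with h | h
    · obtain ⟨z₀, hz₀, hz₀'⟩ := ih v hv
      refine ⟨z₀, hz₀, ?_⟩
      push_cast
      nlinarith [hplaw, hwsq]
    · obtain ⟨z₀, hz₀, hz₀'⟩ := ih u hu
      refine ⟨z₀, hz₀, ?_⟩
      push_cast
      nlinarith [hplaw, hwsq]

set_option maxHeartbeats 1000000 in
lemma core_cover (D : Set X) (h0 : (0 : X) ∈ D) {ε ε' : ℝ} (hε : 0 < ε) (hεε' : ε < ε')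
    (hchord : ∀ d ∈ D, ∃ u v, u ∈ D ∧ v ∈ D ∧ u + v = d + d ∧ 2 * ε' < ‖u - v‖)
    (t : Finset X) (hcov : D ⊆ ⋃ c ∈ t, closedBall c ε) : False := by
  classical
  set γ : ℝ := ε' - ε with hγdef
  have hγ : 0 < γ := by simp [hγdef]; linarith
  set E := Submodule.span ℝ ((t : Set X)) with hE
  haveI : FiniteDimensional ℝ E := FiniteDimensional.span_of_finite ℝ t.finite_toSet
  set S : Set E := {z : E | (z : X) ∈ t} with hSdef
  -- covering invariant
  have hcovT : ∀ T : ℕ, ∀ d ∈ D, ∃ z ∈ midSets γ S T, ‖d - (z : X)‖ ≤ ε := by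
    intro T
    induction T with
    | zero =>
      intro d hd
      obtain ⟨c, hc, hdc⟩ := Set.mem_iUnion₂.1 (hcov hd)
      refine ⟨⟨c, Submodule.subset_span hc⟩, hc, ?_⟩
      rwa [← dist_eq_norm, ← Metric.mem_closedBall]
    | succ T ih =>
      intro d hd
      obtain ⟨u, v, hu, hv, huv, hsep⟩ := hchord d hd
      obtain ⟨zu, hzu, hzu'⟩ := ih u hu
      obtain ⟨zv, hzv, hzv'⟩ := ih v hv
      have hzsep : 2 * γ < ‖zu - zv‖ := by
        have h1 : ‖(zu : X) - (zv : X)‖ ≥ ‖u - v‖ - ‖u - zu‖ - ‖v - zv‖ := by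
          have : u - v = (u - zu) + ((zu : X) - zv) + (zv - v) := by abel
          have h2 : ‖u - v‖ ≤ ‖u - zu‖ + ‖(zu : X) - zv‖ + ‖zv - v‖ := by
            rw [this]; exact norm_add₃_le
          have h3 : ‖zv - v‖ = ‖v - zv‖ := norm_sub_rev _ _
          linarith
        have : ‖(zu - zv : E)‖ = ‖(zu : X) - (zv : X)‖ := by
          have h4 : ‖(zu - zv : E)‖ = ‖((zu - zv : E) : X)‖ := rfl
          rw [h4]; norm_cast
        rw [this]
        have : (2:ℝ) * γ = 2 * ε' - ε - ε := by rw [hγdef]; ring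
        linarith
      refine ⟨(2⁻¹ : ℝ) • (zu + zv), ⟨zu, zv, hzu, hzv, hzsep, rfl⟩, ?_⟩
      have hd2 : d = (2⁻¹ : ℝ) • (u + v) := by
        rw [huv, smul_add, ← add_smul]; norm_num
      have hcoe : (((2⁻¹ : ℝ) • (zu + zv) : E) : X) = (2⁻¹ : ℝ) • ((zu : X) + zv) := by
        push_cast; ring_nf
      rw [hcoe, hd2, ← smul_sub]
      have hdiff : (u + v) - ((zu : X) + zv) = (u - zu) + (v - zv) := by abel
      rw [hdiff, norm_smul]
      have : ‖(u - zu) + (v - (zv:X))‖ ≤ ε + ε :=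
        le_trans (norm_add_le _ _) (by linarith [hzu', hzv'])
      have h2 : ‖(2⁻¹ : ℝ)‖ = 2⁻¹ := by norm_num
      rw [h2]; linarith
  -- potential
  obtain ⟨C, hC0, hwC⟩ : ∃ C : ℝ, 0 < C ∧ ∀ w : E,
      ‖w‖ ≤ C * ‖(toEuclidean (E := E)).toContinuousLinearMap w‖ := by
    set L := (toEuclidean (E := E)) with hLdef
    refine ⟨max ‖(L.symm : EuclideanSpace ℝ (Fin (Module.finrank ℝ E)) →L[ℝ] E)‖ 1,
      lt_of_lt_of_le one_pos (le_max_right _ _), fun w => ?_⟩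
    have h1 : ‖w‖ = ‖L.symm (L w)‖ := by simp
    rw [h1]
    calc ‖(L.symm : EuclideanSpace ℝ (Fin (Module.finrank ℝ E)) →L[ℝ] E) (L w)‖
        ≤ ‖(L.symm : EuclideanSpace ℝ (Fin (Module.finrank ℝ E)) →L[ℝ] E)‖ * ‖L w‖ :=
          ContinuousLinearMap.le_opNorm _ _
      _ ≤ _ * ‖L w‖ := by
          apply mul_le_mul_of_nonneg_right (le_max_left _ _) (norm_nonneg _)
  set L : E →L[ℝ] EuclideanSpace ℝ (Fin (Module.finrank ℝ E)) :=
    (toEuclidean (E := E)).toContinuousLinearMap with hL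
  set Φ : E → ℝ := fun z => ‖L z‖ ^ 2 with hΦ
  set c : ℝ := (γ / C) ^ 2 with hc
  have hcpos : 0 < c := by positivity
  have hpot : ∀ T : ℕ, ∀ z ∈ midSets γ S T, ∃ z₀ ∈ S, Φ z + T * c ≤ Φ z₀ :=
    midSets_potential L hC0 hwC hγ S
  -- finish
  have hSfin : S.Finite := Set.Finite.preimage (Subtype.coe_injective.injOn) t.finite_toSet
  have hbdd : BddAbove (Φ '' S) := (hSfin.image Φ).bddAbove
  obtain ⟨B, hB⟩ := hbdd
  set T : ℕ := ⌈B / c⌉₊ + 1 with hT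
  obtain ⟨z, hz, _⟩ := hcovT T 0 h0
  obtain ⟨z₀, hz₀, hz₀'⟩ := hpot T z hz
  have hΦz : 0 ≤ Φ z := by rw [hΦ]; positivity
  have hTc : B < T * c := by
    have h1 : B / c ≤ (⌈B / c⌉₊ : ℝ) := Nat.le_ceil _
    have h2 : (T : ℝ) = (⌈B / c⌉₊ : ℝ) + 1 := by rw [hT]; push_cast; ring
    have h3 : B = (B / c) * c := by field_simp
    rw [h2]
    calc B = (B / c) * c := h3
      _ ≤ (⌈B / c⌉₊ : ℝ) * c := by apply mul_le_mul_of_nonneg_right h1 hcpos.le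
      _ < ((⌈B / c⌉₊ : ℝ) + 1) * c := by nlinarith
  have : Φ z₀ ≤ B := hB (Set.mem_image_of_mem Φ hz₀)
  linarith

lemma mem_symmSet_iff {ι : Type*} (A : Set X) (x : ι → X) (d : X) :
    d ∈ symmSet A x ↔ ∀ i, x i + d ∈ A ∧ x i - d ∈ A := by
  simp [symmSet, symmAt, Set.mem_iInter]

/-- the doubled family of points -/
def doubledPts {N : ℕ} (x : Fin N → X) (d : X) : Fin (2 * N) → X := fun i =>
  if h : (i : ℕ) < N then x ⟨i, h⟩ + d
  else x ⟨(i : ℕ) - N, by omega⟩ - d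

lemma doubledPts_mem {N : ℕ} {A : Set X} {x : Fin N → X} {d : X}
    (hd : d ∈ symmSet A x) : ∀ i, doubledPts x d i ∈ A := by
  intro i
  rw [mem_symmSet_iff] at hd
  unfold doubledPts
  split
  · exact (hd _).1
  · exact (hd _).2

lemma symmSet_doubledPts {N : ℕ} (A : Set X) (x : Fin N → X) (d : X) :
    symmSet A (doubledPts x d) = symmAt (symmSet A x) d := by
  ext e
  rw [mem_symmSet_iff]
  constructor
  · intro h
    constructor <;> rw [mem_symmSet_iff] <;> intro n
    · have h1 := h ⟨(n : ℕ), by omega⟩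
      have h2 := h ⟨N + (n : ℕ), by omega⟩
      unfold doubledPts at h1 h2
      rw [dif_pos (by simp [n.isLt] : ((⟨(n:ℕ), by omega⟩ : Fin (2*N)) : ℕ) < N)] at h1
      rw [dif_neg (by simp : ¬ ((⟨N + (n:ℕ), by omega⟩ : Fin (2*N)) : ℕ) < N)] at h2
      simp only [Fin.eta] at h1
      have hidx : (⟨(⟨N + (n:ℕ), by omega⟩ : Fin (2*N)) - N, by omega⟩ : Fin N) = n := by
        ext; simp
      rw [hidx] at h2
      constructor
      · have := h1.1; rwa [show x n + d + e = x n + (d + e) by abel] at this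
      · have := h2.2; rwa [show x n - d - e = x n - (d + e) by abel] at this
    · have h1 := h ⟨(n : ℕ), by omega⟩
      have h2 := h ⟨N + (n : ℕ), by omega⟩
      unfold doubledPts at h1 h2
      rw [dif_pos (by simp [n.isLt] : ((⟨(n:ℕ), by omega⟩ : Fin (2*N)) : ℕ) < N)] at h1
      rw [dif_neg (by simp : ¬ ((⟨N + (n:ℕ), by omega⟩ : Fin (2*N)) : ℕ) < N)] at h2
      simp only [Fin.eta] at h1
      have hidx : (⟨(⟨N + (n:ℕ), by omega⟩ : Fin (2*N)) - N, by omega⟩ : Fin N) = n := by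
        ext; simp
      rw [hidx] at h2
      constructor
      · have := h1.2; rwa [show x n + d - e = x n + (d - e) by abel] at this
      · have := h2.1; rwa [show x n - d + e = x n - (d - e) by abel] at this
  · rintro ⟨h1, h2⟩ i
    rw [mem_symmSet_iff] at h1 h2
    unfold doubledPts
    by_cases hi : (i : ℕ) < N
    case pos =>
      rw [dif_pos hi]
      constructor
      · have := (h1 ⟨(i:ℕ), hi⟩).1
        rwa [show x ⟨(i:ℕ), hi⟩ + (d + e) = x ⟨(i:ℕ), hi⟩ + d + e by abel] at this
      · have := (h2 ⟨(i:ℕ), hi⟩).1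
        rwa [show x ⟨(i:ℕ), hi⟩ + (d - e) = x ⟨(i:ℕ), hi⟩ + d - e by abel] at this
    case neg =>
      rw [dif_neg hi]
      constructor
      · have := (h2 ⟨(i:ℕ) - N, by omega⟩).2
        rwa [show x ⟨(i:ℕ) - N, by omega⟩ - (d - e) = x ⟨(i:ℕ) - N, by omega⟩ - d + e by abel]
          at this
      · have := (h1 ⟨(i:ℕ) - N, by omega⟩).2
        rwa [show x ⟨(i:ℕ) - N, by omega⟩ - (d + e) = x ⟨(i:ℕ) - N, by omega⟩ - d - e by abel]
          at this

/-- if `D ∈ Δ_N(A)`, then `α(D) ≥ δ_{2N}(A)`. -/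
theorem stmt3 (A : Set X) (hA : IsBounded A) (N : ℕ) (hN : 0 < N)
    (D : Set X) (hD : D ∈ DeltaFam A N) :
    deltaN A (2 * N) ≤ kuratowski D := by
  simp only [DeltaFam, Set.mem_setOf_eq] at hD
  obtain ⟨x, hxA, rfl⟩ := hD
  set D := symmSet A x with hDdef
  have h0 : (0 : X) ∈ D := by
    rw [hDdef, mem_symmSet_iff]; intro i
    simp only [add_zero, sub_zero]
    exact ⟨hxA i, hxA i⟩
  have hDbdd : ∃ R : ℝ, 0 ≤ R ∧ D ⊆ closedBall 0 (2 * R) := by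
    obtain ⟨R, hR⟩ := hA.subset_closedBall 0
    have hR0 : 0 ≤ R := by
      have := hR (hxA ⟨0, hN⟩)
      simp only [Metric.mem_closedBall, dist_zero_right] at this
      exact le_trans (norm_nonneg _) this
    refine ⟨R, hR0, fun d hd => ?_⟩
    rw [hDdef, mem_symmSet_iff] at hd
    have h1 := (hd ⟨0, hN⟩).1
    have h2 := hR h1
    have h3 := hR (hxA ⟨0, hN⟩)
    simp only [Metric.mem_closedBall, dist_zero_right] at h2 h3 ⊢
    calc ‖d‖ = ‖(x ⟨0, hN⟩ + d) - x ⟨0, hN⟩‖ := by rw [add_sub_cancel_left]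
      _ ≤ ‖x ⟨0, hN⟩ + d‖ + ‖x ⟨0, hN⟩‖ := norm_sub_le _ _
      _ ≤ 2 * R := by linarith
  apply le_csInf
  · obtain ⟨R, hR0, hRD⟩ := hDbdd
    refine ⟨2 * R + 1, by linarith, {0}, ?_⟩
    intro d hd
    simp only [Finset.mem_singleton, Set.iUnion_iUnion_eq_left]
    exact Metric.closedBall_subset_closedBall (by linarith) (hRD hd)
  · rintro ε ⟨hε, t, hcov⟩
    by_contra hlt
    push_neg at hlt
    set ρ := deltaN A (2 * N) with hρ
    set ε' : ℝ := (ρ + ε) / 2 with hε'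
    have hεε' : ε < ε' := by rw [hε']; linarith
    have hε'ρ : ε' < ρ := by rw [hε']; linarith
    have hchord : ∀ d ∈ D, ∃ u v, u ∈ D ∧ v ∈ D ∧ u + v = d + d ∧ 2 * ε' < ‖u - v‖ := by
      intro d hd
      have hmem : symmAt D d ∈ DeltaFam A (2 * N) :=
        ⟨doubledPts x d, doubledPts_mem hd, (symmSet_doubledPts A x d).symm⟩
      have hbdd : BddBelow (delta0 '' DeltaFam A (2 * N)) := by
        refine ⟨0, ?_⟩
        rintro r ⟨S, _, rfl⟩
        have := Metric.diam_nonneg (s := S)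
        unfold delta0; linarith
      have hρle : ρ ≤ delta0 (symmAt D d) :=
        csInf_le hbdd (Set.mem_image_of_mem _ hmem)
      have hdiam : 2 * ε' < diam (symmAt D d) := by
        unfold delta0 at hρle; linarith
      obtain ⟨e₁, he₁, e₂, he₂, hdist⟩ : ∃ e₁ ∈ symmAt D d, ∃ e₂ ∈ symmAt D d,
          2 * ε' < dist e₁ e₂ := by
        by_contra hcon
        push_neg at hcon
        have hε'pos : (0:ℝ) < ε' := lt_trans hε hεε'
        have := Metric.diam_le_of_forall_dist_le (by linarith : (0:ℝ) ≤ 2 * ε')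
          (fun a ha b hb => hcon a ha b hb)
        linarith
      have hbig : ∃ e ∈ symmAt D d, ε' < ‖e‖ := by
        rcases lt_or_ge ε' ‖e₁‖ with h | h
        · exact ⟨e₁, he₁, h⟩
        · refine ⟨e₂, he₂, ?_⟩
          rw [dist_eq_norm] at hdist
          have h4 : ‖e₁ - e₂‖ ≤ ‖e₁‖ + ‖e₂‖ := norm_sub_le _ _
          linarith
      obtain ⟨e, he, hebig⟩ := hbig
      refine ⟨d + e, d - e, he.1, he.2, by abel, ?_⟩
      have : (d + e) - (d - e) = e + e := by abel
      rw [this]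
      calc 2 * ε' < 2 * ‖e‖ := by linarith
        _ = ‖(2:ℝ) • e‖ := by rw [norm_smul]; norm_num
        _ = ‖e + e‖ := by rw [two_smul]
    exact core_cover D h0 hε hεε' hchord t hcov
end

section
/- Let X be a real Banach space, F ⊆ X a finite-dimensional linear subspace, and D ⊆ X a bounded set. If the Kuratowski measure of non-compactness satisfies α(D) > λ > 0, then there exists x₀* ∈ X* with ‖x₀*‖ = 1, x₀* vanishing on F, and sup{x₀*(d) : d ∈ D} > λ. -/
open Set Metric Bornology

variable {X : Type*} [NormedAddCommGroup X] [NormedSpace ℝ X] [CompleteSpace X]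

set_option linter.unusedSectionVars false in
lemma aux_func (F : Submodule ℝ X) (hF : FiniteDimensional ℝ F) (lam : ℝ) (hlam : 0 < lam)
    (x : X) (hx : lam < infDist x (F : Set X)) :
    ∃ f : X →L[ℝ] ℝ, ‖f‖ = 1 ∧ (∀ y ∈ F, f y = 0) ∧ lam < f x := by
  haveI hFc : IsClosed (F : Set X) := F.closed_of_finiteDimensional
  set π : X →L[ℝ] X ⧸ F :=
    F.mkQ.mkContinuous 1 (fun z => by simpa using Submodule.Quotient.norm_mk_le F z) with hπ
  have hπle : ‖π‖ ≤ 1 := F.mkQ.mkContinuous_norm_le zero_le_one _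
  have hπnorm : ∀ z : X, ‖π z‖ = infDist z (F : Set X) := fun z =>
    QuotientAddGroup.norm_mk z
  have hπx : 0 < ‖π x‖ := by rw [hπnorm]; linarith
  obtain ⟨g, hg1, hgx⟩ := exists_dual_vector ℝ (π x) (by simpa using hπx.ne')
  refine ⟨g.comp π, ?_, ?_, ?_⟩
  · set f := g.comp π with hf
    have hfx : f x = ‖π x‖ := by simpa [hf] using hgx
    have hfle : ‖f‖ ≤ 1 := by
      calc ‖f‖ ≤ ‖g‖ * ‖π‖ := g.opNorm_comp_le π
        _ ≤ 1 := by rw [hg1, one_mul]; exact hπle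
    have hfpos : 0 < ‖f‖ := by
      by_contra hc
      push_neg at hc
      have : ‖f‖ = 0 := le_antisymm hc (norm_nonneg _)
      have hb : |f x| ≤ ‖f‖ * ‖x‖ := f.le_opNorm x
      rw [this, zero_mul, hfx] at hb
      have := abs_nonneg (‖π x‖)
      rw [abs_of_nonneg (norm_nonneg _)] at hb
      linarith
    have key : ‖π x‖ / ‖f‖ ≤ infDist x (F : Set X) := by
      rw [infDist_eq_iInf]
      haveI : Nonempty (F : Set X) := ⟨⟨0, F.zero_mem⟩⟩
      refine le_ciInf fun yy => ?_
      obtain ⟨y, hy⟩ := yy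
      have hfy : f y = 0 := by
        have : π y = 0 := by
          simp [hπ, LinearMap.mkContinuous_apply, Submodule.Quotient.mk_eq_zero]
          exact hy
        simp [hf, this]
      have h1 : ‖π x‖ = f (x - y) := by rw [map_sub, hfy, sub_zero, hfx]
      have h2 : f (x - y) ≤ ‖f‖ * ‖x - y‖ := (le_abs_self _).trans (f.le_opNorm _)
      rw [div_le_iff₀ hfpos, dist_eq_norm]
      calc ‖π x‖ = f (x - y) := h1
        _ ≤ ‖f‖ * ‖x - y‖ := h2
        _ = ‖x - y‖ * ‖f‖ := mul_comm _ _
    rw [← hπnorm, div_le_iff₀ hfpos] at key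
    have : 1 ≤ ‖f‖ := by
      nlinarith
    linarith
  · intro y hy
    have : π y = 0 := by
      simp [hπ, LinearMap.mkContinuous_apply, Submodule.Quotient.mk_eq_zero, hy]
    simp [this]
  · have : (g.comp π) x = ‖π x‖ := by simpa using hgx
    rw [this, hπnorm]; exact hx

/-- if `F ⊆ X` is a finite-dimensional subspace, `D ⊆ X` is bounded and
`α(D) > λ > 0`, then there is a norm-one functional vanishing on `F` whose supremum on `D`
exceeds `λ`. -/
theorem stmt4 (F : Submodule ℝ X) (hF : FiniteDimensional ℝ F)
    (D : Set X) (hD : IsBounded D) (lam : ℝ) (hlam : 0 < lam) (h : lam < kuratowski D) :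
    ∃ f : X →L[ℝ] ℝ, ‖f‖ = 1 ∧ (∀ y ∈ F, f y = 0) ∧ lam < sSup (f '' D) := by
  have hstep : ∃ x ∈ D, lam < infDist x (F : Set X) := by
    by_contra hc
    push_neg at hc
    have hub : ∀ ε > (0:ℝ), kuratowski D ≤ lam + ε := by
      intro ε hε
      obtain ⟨R, hR⟩ := hD.subset_closedBall 0
      have hK : IsCompact (((↑) : F → X) '' (closedBall (0:F) (R + lam + 1))) :=
        (isCompact_closedBall _ _).image continuous_subtype_val
      obtain ⟨t, htf, htc⟩ := (Metric.totallyBounded_iff.mp hK.totallyBounded) (ε/2)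
        (by linarith)
      refine le_trans (csInf_le ⟨0, fun z hz => hz.1.le⟩ ?_) le_rfl
      refine ⟨by linarith, htf.toFinset, fun d hd => ?_⟩
      have hdF : infDist d (F : Set X) ≤ lam := hc d hd
      have hne : (F : Set X).Nonempty := ⟨0, F.zero_mem⟩
      have hlt : infDist d (F : Set X) < lam + min (ε/2) 1 := by
        have : 0 < min (ε/2) 1 := by positivity
        linarith
      obtain ⟨y, hyF, hdy⟩ := (infDist_lt_iff hne).mp hlt
      have hyn : ‖y‖ ≤ R + lam + 1 := by
        have h1 : ‖d‖ ≤ R := by simpa using hR hd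
        have h2 : dist d y < lam + 1 := by
          have := min_le_right (ε/2) (1:ℝ); linarith
        have hy1 : ‖y‖ ≤ ‖d‖ + ‖y - d‖ := by
          calc ‖y‖ = ‖d + (y - d)‖ := by congr 1; abel
            _ ≤ ‖d‖ + ‖y - d‖ := norm_add_le _ _
        have hy2 : ‖y - d‖ = dist d y := by rw [← dist_eq_norm, dist_comm]
        linarith [hy1, hy2.le, hy2.ge]
      have hyK : y ∈ ((↑) : F → X) '' (closedBall (0:F) (R + lam + 1)) := by
        refine ⟨⟨y, hyF⟩, ?_, rfl⟩
        simpa [mem_closedBall, dist_zero_right] using hyn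
      obtain ⟨c, hct, hyc⟩ := mem_iUnion₂.mp (htc hyK)
      refine mem_iUnion₂.mpr ⟨c, htf.mem_toFinset.mpr hct, ?_⟩
      rw [mem_closedBall]
      have h4 : dist y c < ε/2 := mem_ball.mp hyc
      have h5 : min (ε/2) 1 ≤ ε/2 := min_le_left _ _
      calc dist d c ≤ dist d y + dist y c := dist_triangle _ _ _
        _ ≤ lam + ε := by linarith
    have : kuratowski D ≤ lam := le_of_forall_pos_le_add hub
    linarith
  obtain ⟨x, hxD, hx⟩ := hstep
  obtain ⟨f, h1, h2, h3⟩ := aux_func F hF lam hlam x hx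
  refine ⟨f, h1, h2, ?_⟩
  have hbdd : BddAbove (f '' D) := by
    obtain ⟨R, hR⟩ := hD.subset_closedBall 0
    refine ⟨‖f‖ * R, ?_⟩
    rintro z ⟨d, hd, rfl⟩
    have h4 : ‖d‖ ≤ R := by simpa using hR hd
    calc f d ≤ |f d| := le_abs_self _
      _ ≤ ‖f‖ * ‖d‖ := f.le_opNorm d
      _ ≤ ‖f‖ * R := by nlinarith [norm_nonneg f, norm_nonneg d]
  have : f x ≤ sSup (f '' D) := le_csSup hbdd ⟨x, hxD, rfl⟩
  linarith
end

section
/- Let X be a real Banach space. The following are equivalent: (i) c₀ is not isomorphic to a (closed linear) subspace of X; (ii) δ_∞(C) = 0 for every bounded set C ⊆ X; (iii) δ_∞(C) = 0 for every bounded, convex, closed set C ⊆ X. -/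
open Set Metric Bornology

variable {X : Type*} [NormedAddCommGroup X] [NormedSpace ℝ X] [CompleteSpace X]

open scoped ZeroAtInfty

/-- `X` contains an isomorphic copy of `c₀`: a continuous linear map `T : c₀ → X` which is
bounded below (hence an isomorphism onto its range). -/
def ContainsC0 (X : Type*) [NormedAddCommGroup X] [NormedSpace ℝ X] : Prop :=
  ∃ T : C₀(ℕ, ℝ) →L[ℝ] X, ∃ a : ℝ, 0 < a ∧ ∀ z : C₀(ℕ, ℝ), a * ‖z‖ ≤ ‖T z‖

lemma delta0_nonneg (A : Set X) : 0 ≤ delta0 A := div_nonneg diam_nonneg (by norm_num)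

lemma deltaN_nonneg (A : Set X) (N : ℕ) : 0 ≤ deltaN A N :=
  Real.sInf_nonneg (by rintro x ⟨D, _, rfl⟩; exact delta0_nonneg D)

lemma deltaInf_nonneg (A : Set X) : 0 ≤ deltaInf A :=
  le_ciInf fun N => deltaN_nonneg A (N + 1)

lemma deltaInf_le_deltaN (A : Set X) (N : ℕ) : deltaInf A ≤ deltaN A (N + 1) :=
  ciInf_le ⟨0, by rintro x ⟨n, rfl⟩; exact deltaN_nonneg A (n + 1)⟩ N

lemma deltaN_le_delta0 {A : Set X} {N : ℕ} {D : Set X} (hD : D ∈ DeltaFam A N) :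
    deltaN A N ≤ delta0 D :=
  csInf_le ⟨0, by rintro x ⟨E, _, rfl⟩; exact delta0_nonneg E⟩ ⟨D, hD, rfl⟩

/-- Dual-based bound: if all ±1 sign combinations of `d` have norm ≤ M, then any
coefficient combination with `|z i| ≤ b` has norm `≤ M * b`. -/
lemma norm_sum_smul_le {n : ℕ} (d : Fin n → X) (M : ℝ)
    (h : ∀ ε : Fin n → ℝ, (∀ i, ε i = 1 ∨ ε i = -1) → ‖∑ i, ε i • d i‖ ≤ M)
    (z : Fin n → ℝ) (b : ℝ) (hb : 0 ≤ b) (hz : ∀ i, |z i| ≤ b) :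
    ‖∑ i, z i • d i‖ ≤ M * b := by
  have hM : 0 ≤ M := le_trans (norm_nonneg _) (by simpa using h (fun _ => 1) (fun i => Or.inl rfl))
  refine NormedSpace.norm_le_dual_bound ℝ _ (by positivity) (fun f => ?_)
  classical
  set ε : Fin n → ℝ := fun i => if 0 ≤ f (d i) then 1 else -1 with hε
  have hsign : ∀ i, ε i * f (d i) = |f (d i)| := by
    intro i
    by_cases hi : 0 ≤ f (d i)
    · simp [hε, hi, abs_of_nonneg hi]
    · simp [hε, hi, abs_of_neg (lt_of_not_ge hi)]
  have key : ∑ i, |f (d i)| ≤ M * ‖f‖ := by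
    calc ∑ i, |f (d i)| = f (∑ i, ε i • d i) := by
          rw [map_sum]; exact Finset.sum_congr rfl (fun i _ => by rw [map_smul, smul_eq_mul, hsign])
      _ ≤ ‖f (∑ i, ε i • d i)‖ := le_abs_self _
      _ ≤ ‖f‖ * ‖∑ i, ε i • d i‖ := f.le_opNorm _
      _ ≤ ‖f‖ * M := by
          exact mul_le_mul_of_nonneg_left (h ε (fun i => by by_cases hi : 0 ≤ f (d i) <;> simp [hε, hi])) (norm_nonneg f)
      _ = M * ‖f‖ := by ring
  calc ‖f (∑ i, z i • d i)‖ = |∑ i, z i * f (d i)| := by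
        rw [map_sum, Real.norm_eq_abs]
        congr 1
        exact Finset.sum_congr rfl (fun i _ => by rw [map_smul, smul_eq_mul])
    _ ≤ ∑ i, |z i * f (d i)| := Finset.abs_sum_le_sum_abs _ _
    _ ≤ ∑ i, b * |f (d i)| := by
        refine Finset.sum_le_sum (fun i _ => ?_)
        rw [abs_mul]
        exact mul_le_mul_of_nonneg_right (hz i) (abs_nonneg _)
    _ = b * ∑ i, |f (d i)| := by rw [Finset.mul_sum]
    _ ≤ b * (M * ‖f‖) := mul_le_mul_of_nonneg_left key hb
    _ = M * b * ‖f‖ := by ring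

lemma exists_step {C : Set X} (hC : IsBounded C) {r : ℝ} (hr : 0 < r)
    (hdN : ∀ N : ℕ, r ≤ deltaN C (N + 1)) (x₀ : X) {n : ℕ} (d : Fin n → X)
    (hd : ∀ ε : Fin n → ℝ, (∀ i, ε i = 1 ∨ ε i = -1) → x₀ + ∑ i, ε i • d i ∈ C) :
    ∃ e : X, r / 2 ≤ ‖e‖ ∧ ∀ ε : Fin n → ℝ, (∀ i, ε i = 1 ∨ ε i = -1) →
      (x₀ + ∑ i, ε i • d i) + e ∈ C ∧ (x₀ + ∑ i, ε i • d i) - e ∈ C := by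
  classical
  set sgn : Bool → ℝ := fun b => if b then 1 else -1 with hsgn
  have sgn_sign : ∀ b, sgn b = 1 ∨ sgn b = -1 := fun b => by cases b <;> simp [hsgn]
  set p : (Fin n → Bool) → X := fun b => x₀ + ∑ i, sgn (b i) • d i with hp'
  have hp : ∀ b, p b ∈ C := fun b => hd _ (fun i => sgn_sign (b i))
  let eqv : (Fin n → Bool) ≃ Fin (2 ^ n) :=
    (Equiv.arrowCongr (Equiv.refl (Fin n)) finTwoEquiv.symm).trans finFunctionFinEquiv
  set x : Fin (2 ^ n) → X := p ∘ eqv.symm with hx'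
  have hD : symmSet C x ∈ DeltaFam C (2 ^ n) := ⟨x, fun k => hp _, rfl⟩
  set D := symmSet C x with hD'
  have hDb : IsBounded D := by
    obtain ⟨R, hR⟩ := hC.subset_closedBall 0
    have hk : (0 : ℕ) < 2 ^ n := Nat.pow_pos (n := n) (by norm_num)
    refine (isBounded_closedBall (x := (0 : X)) (r := 2 * R)).subset (fun v hv => ?_)
    have hv0 := (Set.mem_iInter.1 hv ⟨0, hk⟩)
    have h1 : x ⟨0, hk⟩ + v ∈ C := hv0.1
    have h2 : x ⟨0, hk⟩ ∈ C := hp _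
    have e1 := hR h1
    have e2 := hR h2
    simp only [Metric.mem_closedBall, dist_zero_right] at e1 e2 ⊢
    calc ‖v‖ = ‖(x ⟨0, hk⟩ + v) - x ⟨0, hk⟩‖ := by rw [add_sub_cancel_left]
      _ ≤ ‖x ⟨0, hk⟩ + v‖ + ‖x ⟨0, hk⟩‖ := norm_sub_le _ _
      _ ≤ 2 * R := by linarith
  have hrD : r ≤ delta0 D := by
    have h2 := hdN (2 ^ n - 1)
    have he : 2 ^ n - 1 + 1 = 2 ^ n := Nat.succ_pred_eq_of_pos (Nat.pow_pos (n := n) (by norm_num))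
    rw [he] at h2
    exact le_trans h2 (deltaN_le_delta0 hD)
  -- extract a far pair
  obtain ⟨u, hu, v, hv, huv⟩ : ∃ u ∈ D, ∃ v ∈ D, r < dist u v := by
    by_contra hcon
    push_neg at hcon
    have : diam D ≤ r := diam_le_of_forall_dist_le hr.le hcon
    rw [delta0] at hrD
    linarith
  have hbig : r / 2 ≤ ‖u‖ ∨ r / 2 ≤ ‖v‖ := by
    by_contra hcon
    push_neg at hcon
    rw [dist_eq_norm] at huv
    have := norm_sub_le u v
    linarith [hcon.1, hcon.2]
  have key : ∀ e ∈ D, ∀ ε : Fin n → ℝ, (∀ i, ε i = 1 ∨ ε i = -1) →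
      (x₀ + ∑ i, ε i • d i) + e ∈ C ∧ (x₀ + ∑ i, ε i • d i) - e ∈ C := by
    intro e he ε hε
    set b : Fin n → Bool := fun i => decide (ε i = 1) with hb
    have hpb : p b = x₀ + ∑ i, ε i • d i := by
      show x₀ + ∑ i, sgn (b i) • d i = x₀ + ∑ i, ε i • d i
      congr 1
      refine Finset.sum_congr rfl (fun i _ => ?_)
      rcases hε i with h | h
      · simp [hb, h, hsgn]
      · have hne : ε i ≠ 1 := by rw [h]; norm_num
        have hbi : b i = false := by simp [hb, hne]
        rw [hbi, h]
        norm_num [hsgn]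
    have := Set.mem_iInter.1 he (eqv b)
    rw [hx'] at this
    simp only [Function.comp_apply, Equiv.symm_apply_apply] at this
    rw [hpb] at this
    exact this
  rcases hbig with h | h
  · exact ⟨u, h, key u hu⟩
  · exact ⟨v, h, key v hv⟩

lemma exists_tree {C : Set X} (hC : IsBounded C) {r : ℝ} (hr : 0 < r)
    (hdN : ∀ N : ℕ, r ≤ deltaN C (N + 1)) {x₀ : X} (hx₀ : x₀ ∈ C) :
    ∃ d : ℕ → X, (∀ k, r / 2 ≤ ‖d k‖) ∧
      ∀ (n : ℕ) (ε : Fin n → ℝ), (∀ i, ε i = 1 ∨ ε i = -1) →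
        x₀ + ∑ i, ε i • d i ∈ C := by
  classical
  set P : ∀ n : ℕ, (Fin n → X) → Prop :=
    fun n dd => ∀ ε : Fin n → ℝ, (∀ i, ε i = 1 ∨ ε i = -1) → x₀ + ∑ i, ε i • dd i ∈ C
    with hP'
  have step' : ∀ (n : ℕ) (dd : Fin n → X), ∃ e : X, P n dd →
      (r / 2 ≤ ‖e‖ ∧ ∀ ε : Fin n → ℝ, (∀ i, ε i = 1 ∨ ε i = -1) →
        (x₀ + ∑ i, ε i • dd i) + e ∈ C ∧ (x₀ + ∑ i, ε i • dd i) - e ∈ C) := by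
    intro n dd
    by_cases h : P n dd
    · obtain ⟨e, he1, he2⟩ := exists_step hC hr hdN x₀ dd h
      exact ⟨e, fun _ => ⟨he1, he2⟩⟩
    · exact ⟨0, fun h' => absurd h' h⟩
  set pick : ∀ n : ℕ, (Fin n → X) → X := fun n dd => (step' n dd).choose with hpick'
  set seq : ∀ n : ℕ, Fin n → X :=
    fun n => Nat.rec (motive := fun m => Fin m → X) (fun i => 0)
      (fun m prev => Fin.snoc prev (pick m prev)) n with hseq'
  have hseq_succ : ∀ n, seq (n + 1) = Fin.snoc (seq n) (pick n (seq n)) := fun n => rfl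
  have hP : ∀ n, P n (seq n) := by
    intro n
    induction n with
    | zero => intro ε hε; simpa using hx₀
    | succ n ih =>
      intro ε hε
      have hspec := (step' n (seq n)).choose_spec ih
      rw [hseq_succ]
      rw [Fin.sum_univ_castSucc]
      simp only [Fin.snoc_castSucc, Fin.snoc_last]
      have h2 := (hspec.2 (fun i => ε i.castSucc) (fun i => hε i.castSucc))
      rcases hε (Fin.last n) with h | h
      · rw [h, one_smul, ← add_assoc]
        exact h2.1
      · rw [h, neg_smul, one_smul, ← sub_eq_add_neg, ← add_sub_assoc]
        exact h2.2
  set d : ℕ → X := fun k => seq (k + 1) (Fin.last k) with hd'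
  have hdpick : ∀ k, d k = pick k (seq k) := by
    intro k
    show seq (k + 1) (Fin.last k) = _
    rw [hseq_succ]
    exact Fin.snoc_last _ _
  have hcoh : ∀ (n : ℕ) (i : Fin n), seq n i = d i := by
    intro n
    induction n with
    | zero => exact fun i => absurd i.2 (Nat.not_lt_zero _)
    | succ n ih =>
      intro i
      induction i using Fin.lastCases with
      | last =>
        rw [hseq_succ, Fin.snoc_last, ← hdpick]
        rfl
      | cast j =>
        rw [hseq_succ, Fin.snoc_castSucc]
        simpa using ih j
  refine ⟨d, fun k => ?_, fun n ε hε => ?_⟩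
  · rw [hdpick]
    exact ((step' k (seq k)).choose_spec (hP k)).1
  · have := hP n ε hε
    have hsum : ∑ i, ε i • seq n i = ∑ i, ε i • d i :=
      Finset.sum_congr rfl (fun i _ => by rw [hcoh n i])
    rwa [hsum] at this

lemma sum_finset_smul_le (d : ℕ → X) (M : ℝ)
    (hsb : ∀ (n : ℕ) (ε : Fin n → ℝ), (∀ i, ε i = 1 ∨ ε i = -1) → ‖∑ i, ε i • d (i : ℕ)‖ ≤ M)
    (s : Finset ℕ) (w : ℕ → ℝ) (b : ℝ) (hb : 0 ≤ b) (hw : ∀ j ∈ s, |w j| ≤ b) :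
    ‖∑ j ∈ s, w j • d j‖ ≤ M * b := by
  classical
  obtain ⟨n, hsn⟩ := s.exists_nat_subset_range
  set z : Fin n → ℝ := fun i => if (i : ℕ) ∈ s then w i else 0 with hz'
  have hzb : ∀ i, |z i| ≤ b := by
    intro i
    by_cases h : (i : ℕ) ∈ s
    · simpa [hz', h] using hw i h
    · simpa [hz', h] using hb
  have key := norm_sum_smul_le (fun i : Fin n => d (i : ℕ)) M (hsb n) z b hb hzb
  have he : ∑ i : Fin n, z i • d (i : ℕ) = ∑ j ∈ s, w j • d j := by
    rw [Fin.sum_univ_eq_sum_range (fun j => (if j ∈ s then w j else 0) • d j) n]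
    rw [← Finset.sum_filter_add_sum_filter_not (Finset.range n) (· ∈ s)]
    have h1 : (Finset.range n).filter (· ∈ s) = s := by
      rw [Finset.filter_mem_eq_inter]
      exact Finset.inter_eq_right.2 hsn
    have h2 : ∀ j ∈ (Finset.range n).filter (¬ · ∈ s), (if j ∈ s then w j else 0) • d j = 0 := by
      intro j hj
      rw [Finset.mem_filter] at hj
      simp [hj.2]
    rw [Finset.sum_eq_zero h2, add_zero, h1]
    refine Finset.sum_congr rfl (fun j hj => by simp [hj])
  rwa [he] at key

lemma tail_small {g : ℕ → ℝ} (hg : ∀ j, 0 ≤ g j) {M : ℝ}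
    (hM : ∀ n, ∑ j ∈ Finset.range n, g j ≤ M) {η : ℝ} (hη : 0 < η) :
    ∃ K, ∀ s : Finset ℕ, (∀ j ∈ s, K ≤ j) → ∑ j ∈ s, g j ≤ η := by
  classical
  set S := ⨆ n, ∑ j ∈ Finset.range n, g j with hS'
  have hbdd : BddAbove (Set.range fun n => ∑ j ∈ Finset.range n, g j) :=
    ⟨M, by rintro x ⟨n, rfl⟩; exact hM n⟩
  have hlt : S - η < S := by linarith [sub_lt_self S hη]
  obtain ⟨K, hK⟩ := exists_lt_of_lt_ciSup (hS' ▸ hlt)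
  refine ⟨K, fun s hs => ?_⟩
  set n := max K ((s.sup id) + 1) with hn'
  have hsub : Finset.range K ∪ s ⊆ Finset.range n := by
    intro j hj
    rw [Finset.mem_union] at hj
    rw [Finset.mem_range]
    rcases hj with hj | hj
    · exact lt_of_lt_of_le (Finset.mem_range.1 hj) (le_max_left _ _)
    · exact lt_of_lt_of_le (Nat.lt_succ_of_le (Finset.le_sup (f := id) hj)) (le_max_right _ _)
  have hdisj : Disjoint (Finset.range K) s := by
    rw [Finset.disjoint_left]
    intro j hj hjs
    exact absurd (hs j hjs) (not_le.2 (Finset.mem_range.1 hj))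
  have h1 : ∑ j ∈ Finset.range K, g j + ∑ j ∈ s, g j = ∑ j ∈ Finset.range K ∪ s, g j :=
    (Finset.sum_union hdisj).symm
  have h2 : ∑ j ∈ Finset.range K ∪ s, g j ≤ ∑ j ∈ Finset.range n, g j :=
    Finset.sum_le_sum_of_subset_of_nonneg hsub (fun j _ _ => hg j)
  have h3 : ∑ j ∈ Finset.range n, g j ≤ S := le_ciSup hbdd n
  linarith

open Filter in
lemma exists_selection (u : ℕ → ℕ → ℝ) (c : ℕ → ℝ) (φ : ℕ → ℕ) (hφ : StrictMono φ)
    (hconv : ∀ col : ℕ, Tendsto (fun i => u (φ i) col) atTop (nhds (c col)))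
    (K : ℕ → ℕ) (N₀ : ℕ) {ε : ℝ} (hε : 0 < ε) :
    ∃ ψ : ℕ → ℕ, StrictMono ψ ∧ (∀ i, N₀ ≤ φ (ψ i)) ∧
      (∀ i j : ℕ, j < i → K (φ (ψ j)) ≤ φ (ψ i)) ∧
      (∀ i j : ℕ, j < i → |u (φ (ψ i)) (φ (ψ j)) - c (φ (ψ j))| ≤ ε / 2 ^ (j + 1)) := by
  classical
  have stepex : ∀ (n : ℕ) (prev : Fin n → ℕ), ∃ m : ℕ,
      (∀ j : Fin n, prev j < m) ∧ N₀ ≤ φ m ∧ (∀ j : Fin n, K (φ (prev j)) ≤ φ m) ∧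
      (∀ j : Fin n, |u (φ m) (φ (prev j)) - c (φ (prev j))| ≤ ε / 2 ^ ((j : ℕ) + 1)) := by
    intro n prev
    have e1 : ∀ᶠ m : ℕ in atTop, ∀ j : Fin n, prev j < m :=
      eventually_all.2 (fun j => eventually_gt_atTop (prev j))
    have hmφ : ∀ᶠ m : ℕ in atTop, True := Filter.eventually_true _
    have e2 : ∀ᶠ m : ℕ in atTop, N₀ ≤ φ m :=
      (eventually_ge_atTop N₀).mono (fun m hm => le_trans hm (hφ.le_apply))
    have e3 : ∀ᶠ m : ℕ in atTop, ∀ j : Fin n, K (φ (prev j)) ≤ φ m :=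
      eventually_all.2 (fun j => (eventually_ge_atTop (K (φ (prev j)))).mono
        (fun m hm => le_trans hm (hφ.le_apply)))
    have e4 : ∀ᶠ m : ℕ in atTop, ∀ j : Fin n,
        |u (φ m) (φ (prev j)) - c (φ (prev j))| ≤ ε / 2 ^ ((j : ℕ) + 1) := by
      refine eventually_all.2 (fun j => ?_)
      have hδ : 0 < ε / 2 ^ ((j : ℕ) + 1) := by positivity
      have := Metric.tendsto_atTop.1 (hconv (φ (prev j))) _ hδ
      obtain ⟨N, hN⟩ := this
      refine eventually_atTop.2 ⟨N, fun m hm => ?_⟩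
      have := hN m hm
      rw [Real.dist_eq] at this
      exact this.le
    exact (((e1.and e2).and e3).and e4).exists.imp (fun m hm => ⟨hm.1.1.1, hm.1.1.2, hm.1.2, hm.2⟩)
  set pickm : ∀ n : ℕ, (Fin n → ℕ) → ℕ := fun n prev => (stepex n prev).choose with hpickm'
  set seq : ∀ n : ℕ, Fin n → ℕ :=
    fun n => Nat.rec (motive := fun m => Fin m → ℕ) (fun i => 0)
      (fun m prev => Fin.snoc prev (pickm m prev)) n with hseq'
  have hseq_succ : ∀ n, seq (n + 1) = Fin.snoc (seq n) (pickm n (seq n)) := fun n => rfl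
  set ψ : ℕ → ℕ := fun k => seq (k + 1) (Fin.last k) with hψ'
  have hψpick : ∀ k, ψ k = pickm k (seq k) := by
    intro k
    show seq (k + 1) (Fin.last k) = _
    rw [hseq_succ]
    exact Fin.snoc_last _ _
  have hcoh : ∀ (n : ℕ) (i : Fin n), seq n i = ψ i := by
    intro n
    induction n with
    | zero => exact fun i => absurd i.2 (Nat.not_lt_zero _)
    | succ n ih =>
      intro i
      induction i using Fin.lastCases with
      | last =>
        rw [hseq_succ, Fin.snoc_last, ← hψpick]
        rfl
      | cast j =>
        rw [hseq_succ, Fin.snoc_castSucc]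
        simpa using ih j
  have hspec : ∀ i : ℕ,
      (∀ j : Fin i, seq i j < ψ i) ∧ N₀ ≤ φ (ψ i) ∧ (∀ j : Fin i, K (φ (seq i j)) ≤ φ (ψ i)) ∧
      (∀ j : Fin i, |u (φ (ψ i)) (φ (seq i j)) - c (φ (seq i j))| ≤ ε / 2 ^ ((j : ℕ) + 1)) := by
    intro i
    rw [hψpick]
    exact (stepex i (seq i)).choose_spec
  have hmono : ∀ i j : ℕ, j < i → ψ j < ψ i := by
    intro i j hj
    have := (hspec i).1 ⟨j, hj⟩
    rwa [hcoh i ⟨j, hj⟩] at this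
  refine ⟨ψ, fun j i hj => hmono i j hj, fun i => (hspec i).2.1, fun i j hj => ?_, fun i j hj => ?_⟩
  · have := (hspec i).2.2.1 ⟨j, hj⟩
    rwa [hcoh i ⟨j, hj⟩] at this
  · have := (hspec i).2.2.2 ⟨j, hj⟩
    rwa [hcoh i ⟨j, hj⟩] at this

open scoped ZeroAtInfty in
open Filter NormedSpace in
set_option maxHeartbeats 2000000 in
lemma containsC0_of_deltaN {C : Set X} (hC : IsBounded C) {r : ℝ} (hr : 0 < r)
    (hdN : ∀ N : ℕ, r ≤ deltaN C (N + 1)) (x₀ : X) (hx₀ : x₀ ∈ C) : ContainsC0 X := by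
  classical
  obtain ⟨d, hdnorm, hdmem⟩ := exists_tree hC hr hdN hx₀
  set M : ℝ := diam C / 2 with hM'
  have hM : 0 ≤ M := div_nonneg diam_nonneg (by norm_num)
  -- sign-sum bound
  have hsb : ∀ (n : ℕ) (ε : Fin n → ℝ), (∀ i, ε i = 1 ∨ ε i = -1) →
      ‖∑ i, ε i • d (i : ℕ)‖ ≤ M := by
    intro n ε hε
    have h1 := hdmem n ε hε
    have h2 := hdmem n (fun i => -ε i) (fun i => by rcases hε i with h | h <;> simp [h])
    have hdist := dist_le_diam_of_mem hC h1 h2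
    have he : x₀ + ∑ i, (fun i => -ε i) i • d (i : ℕ) = x₀ - ∑ i, ε i • d (i : ℕ) := by
      rw [sub_eq_add_neg, ← Finset.sum_neg_distrib]
      congr 1
      exact Finset.sum_congr rfl (fun i _ => by rw [neg_smul])
    rw [he, dist_eq_norm] at hdist
    have : x₀ + ∑ i, ε i • d (i : ℕ) - (x₀ - ∑ i, ε i • d (i : ℕ))
        = (2 : ℝ) • ∑ i, ε i • d (i : ℕ) := by
      rw [two_smul]; abel
    rw [this, norm_smul] at hdist
    simp only [Real.norm_ofNat] at hdist
    rw [hM']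
    linarith
  -- dual functionals
  have hdne : ∀ k, d k ≠ 0 := by
    intro k hk
    have := hdnorm k
    rw [hk, norm_zero] at this
    linarith
  have hf : ∀ k, ∃ g : StrongDual ℝ X, ‖g‖ = 1 ∧ g (d k) = ‖d k‖ := by
    intro k
    obtain ⟨g, h1, h2⟩ := exists_dual_vector ℝ (d k) (norm_ne_zero_iff.2 (hdne k))
    exact ⟨g, h1, by exact_mod_cast h2⟩
  choose f hf1 hf2 using hf
  -- ℓ¹ row bounds
  have hl1 : ∀ (g : StrongDual ℝ X) (s : Finset ℕ), ∑ j ∈ s, |g (d j)| ≤ M * ‖g‖ := by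
    intro g s
    set ε : ℕ → ℝ := fun j => if 0 ≤ g (d j) then 1 else -1 with hε'
    have hsum : ∑ j ∈ s, |g (d j)| = g (∑ j ∈ s, ε j • d j) := by
      rw [map_sum]
      refine Finset.sum_congr rfl (fun j _ => ?_)
      by_cases h : 0 ≤ g (d j)
      · rw [abs_of_nonneg h, map_smul, hε']
        simp [h]
      · rw [abs_of_neg (lt_of_not_ge h), map_smul, hε']
        simp [h]
    rw [hsum]
    calc g (∑ j ∈ s, ε j • d j) ≤ ‖g (∑ j ∈ s, ε j • d j)‖ := le_abs_self _
      _ ≤ ‖g‖ * ‖∑ j ∈ s, ε j • d j‖ := g.le_opNorm _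
      _ ≤ ‖g‖ * (M * 1) := by
          refine mul_le_mul_of_nonneg_left ?_ (norm_nonneg g)
          refine sum_finset_smul_le d M hsb s ε 1 zero_le_one (fun j _ => ?_)
          by_cases h : 0 ≤ g (d j) <;> simp [hε', h]
      _ = M * ‖g‖ := by ring
  have hrowM : ∀ k (n : ℕ), ∑ j ∈ Finset.range n, |f k (d j)| ≤ M := by
    intro k n
    have := hl1 (f k) (Finset.range n)
    rwa [hf1 k, mul_one] at this
  have hentry : ∀ k j, |f k (d j)| ≤ M := by
    intro k j
    have := hl1 (f k) {j}
    rwa [hf1 k, mul_one, Finset.sum_singleton] at this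
  -- diagonal extraction
  set u : ℕ → ℕ → ℝ := fun k j => f k (d j) with hu'
  have hcomp : IsCompact (Set.pi Set.univ (fun _ : ℕ => Icc (-M) M)) :=
    isCompact_univ_pi (fun _ => isCompact_Icc)
  have hmem : ∀ k, u k ∈ Set.pi Set.univ (fun _ : ℕ => Icc (-M) M) := by
    intro k
    rw [Set.mem_univ_pi]
    intro j
    exact abs_le.1 (hentry k j)
  obtain ⟨c, -, φ, hφ, hconv⟩ := hcomp.tendsto_subseq hmem
  have hconvj : ∀ j, Tendsto (fun i => u (φ i) j) atTop (nhds (c j)) := by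
    intro j
    exact (tendsto_pi_nhds.1 hconv) j
  have hcM : ∀ n, ∑ j ∈ Finset.range n, |c j| ≤ M := by
    intro n
    have hten : Tendsto (fun i => ∑ j ∈ Finset.range n, |u (φ i) j|) atTop
        (nhds (∑ j ∈ Finset.range n, |c j|)) :=
      tendsto_finset_sum _ (fun j _ => (hconvj j).abs)
    exact le_of_tendsto hten (Filter.Eventually.of_forall (fun i => hrowM (φ i) n))
  -- tail choices
  set ε : ℝ := r / 8 with hε'
  have hεpos : 0 < ε := by rw [hε']; linarith
  obtain ⟨N₀, hN₀⟩ := tail_small (g := fun j => |c j|) (fun j => abs_nonneg _) hcM hεpos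
  have hKex : ∀ k, ∃ K, ∀ s : Finset ℕ, (∀ j ∈ s, K ≤ j) → ∑ j ∈ s, |f k (d j)| ≤ ε :=
    fun k => tail_small (fun j => abs_nonneg _) (hrowM k) hεpos
  choose K hK using hKex
  -- selection
  obtain ⟨ψ, hψ, hsel1, hsel2, hsel3⟩ := exists_selection u c φ hφ hconvj K N₀ hεpos
  set nsel : ℕ → ℕ := fun i => φ (ψ i) with hnsel'
  have hnselmono : StrictMono nsel := hφ.comp hψ
  set E : ℕ → X := fun i => d (nsel i) with hE'
  set G : ℕ → StrongDual ℝ X := fun i => f (nsel i) with hG'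
  -- off-diagonal bound
  have himg : ∀ (s : Finset ℕ), ∀ x ∈ s, ∀ y ∈ s, nsel x = nsel y → x = y :=
    fun s x _ y _ h => hnselmono.injective h
  have hoff : ∀ i n, ∑ j ∈ (Finset.range n).erase i, |G i (E j)| ≤ 3 * ε := by
    intro i n
    set s₁ : Finset ℕ := Finset.range (min i n) with hs₁'
    set s₂ : Finset ℕ := Finset.Ico (i + 1) n with hs₂'
    have hsplit : (Finset.range n).erase i = s₁ ∪ s₂ := by
      ext j
      simp only [hs₁', hs₂', Finset.mem_erase, Finset.mem_range, Finset.mem_union,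
        Finset.mem_Ico, lt_min_iff]
      omega
    have hdisj : Disjoint s₁ s₂ := by
      rw [Finset.disjoint_left]
      intro j h1 h2
      simp only [hs₁', Finset.mem_range, lt_min_iff] at h1
      simp only [hs₂', Finset.mem_Ico] at h2
      omega
    rw [hsplit, Finset.sum_union hdisj]
    have hb1 : ∑ j ∈ s₁, |G i (E j)| ≤ 2 * ε := by
      have hterm : ∀ j ∈ s₁, |G i (E j)| ≤ |c (nsel j)| + ε / 2 ^ (j + 1) := by
        intro j hj
        have hji : j < i := by
          simp only [hs₁', Finset.mem_range, lt_min_iff] at hj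
          exact hj.1
        have h3 := hsel3 i j hji
        calc |G i (E j)| = |c (nsel j) + (u (nsel i) (nsel j) - c (nsel j))| := by
              show |u (nsel i) (nsel j)| = _
              ring_nf
          _ ≤ |c (nsel j)| + |u (nsel i) (nsel j) - c (nsel j)| := abs_add_le _ _
          _ ≤ |c (nsel j)| + ε / 2 ^ (j + 1) := by
              exact add_le_add_right h3 _
      have hs1 : ∑ j ∈ s₁, |G i (E j)| ≤ ∑ j ∈ s₁, (|c (nsel j)| + ε / 2 ^ (j + 1)) :=
        Finset.sum_le_sum hterm
      have hc1 : ∑ j ∈ s₁, |c (nsel j)| ≤ ε := by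
        have heq : ∑ m ∈ s₁.image nsel, |c m| = ∑ j ∈ s₁, |c (nsel j)| :=
          Finset.sum_image (himg s₁)
        rw [← heq]
        refine hN₀ _ (fun m hm => ?_)
        obtain ⟨j, -, rfl⟩ := Finset.mem_image.1 hm
        exact hsel1 j
      have hc2 : ∑ j ∈ s₁, ε / 2 ^ (j + 1) ≤ ε := by
        have heq : ∀ j : ℕ, ε / 2 ^ (j + 1) = ε / 2 * (1 / 2 : ℝ) ^ j := by
          intro j
          rw [one_div_pow, pow_succ]
          ring
        calc ∑ j ∈ s₁, ε / 2 ^ (j + 1) ≤ ∑ j ∈ Finset.range (min i n), ε / 2 ^ (j + 1) := le_of_eq rfl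
          _ = ε / 2 * ∑ j ∈ Finset.range (min i n), (1 / 2 : ℝ) ^ j := by
              rw [Finset.mul_sum]
              exact Finset.sum_congr rfl (fun j _ => heq j)
          _ ≤ ε / 2 * 2 := by
              refine mul_le_mul_of_nonneg_left (sum_geometric_two_le _) (by positivity)
          _ = ε := by ring
      calc ∑ j ∈ s₁, |G i (E j)| ≤ ∑ j ∈ s₁, (|c (nsel j)| + ε / 2 ^ (j + 1)) := hs1
        _ = ∑ j ∈ s₁, |c (nsel j)| + ∑ j ∈ s₁, ε / 2 ^ (j + 1) := Finset.sum_add_distrib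
        _ ≤ ε + ε := add_le_add hc1 hc2
        _ = 2 * ε := by ring
    have hb2 : ∑ j ∈ s₂, |G i (E j)| ≤ ε := by
      have heq : ∑ m ∈ s₂.image nsel, |f (nsel i) (d m)| = ∑ j ∈ s₂, |G i (E j)| :=
        Finset.sum_image (himg s₂)
      rw [← heq]
      refine hK (nsel i) _ (fun m hm => ?_)
      obtain ⟨j, hj, rfl⟩ := Finset.mem_image.1 hm
      have hij : i < j := by
        simp only [hs₂', Finset.mem_Ico] at hj
        omega
      exact hsel2 j i hij
    linarith
  -- norm of finite partial sums over selected indices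
  have hselb : ∀ (t : Finset ℕ) (v : ℕ → ℝ) (b : ℝ), 0 ≤ b → (∀ k ∈ t, |v k| ≤ b) →
      ‖∑ k ∈ t, v k • E k‖ ≤ M * b := by
    intro t v b hb hv
    set w : ℕ → ℝ := fun m => v (Function.invFun nsel m) with hw'
    have hlinv : ∀ k, Function.invFun nsel (nsel k) = k :=
      fun k => Function.leftInverse_invFun hnselmono.injective k
    have he1 : ∑ k ∈ t, v k • E k = ∑ m ∈ t.image nsel, w m • d m := by
      rw [Finset.sum_image (himg t)]
      refine Finset.sum_congr rfl (fun k _ => ?_)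
      simp only [hw', hlinv k]
      try rfl
    rw [he1]
    refine sum_finset_smul_le d M hsb _ w b hb (fun m hm => ?_)
    obtain ⟨k, hk, rfl⟩ := Finset.mem_image.1 hm
    rw [hw']
    simpa only [hlinv k] using hv k hk
  have habs : ∀ (z : C₀(ℕ, ℝ)) (k : ℕ), |z k| ≤ ‖z‖ := by
    intro z k
    have := BoundedContinuousFunction.norm_coe_le_norm z.toBCF k
    rwa [ZeroAtInftyContinuousMap.norm_toBCF_eq_norm, Real.norm_eq_abs] at this
  have hztail : ∀ (z : C₀(ℕ, ℝ)), ∀ η : ℝ, 0 < η → ∃ N, ∀ k, N ≤ k → |z k| ≤ η := by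
    intro z η hη
    have h := zero_at_infty (F := C₀(ℕ, ℝ)) z
    rw [Filter.cocompact_eq_cofinite, Nat.cofinite_eq_atTop] at h
    obtain ⟨N, hN⟩ := (Metric.tendsto_atTop.1 h) η hη
    refine ⟨N, fun k hk => ?_⟩
    have := hN k hk
    rw [Real.dist_eq, sub_zero] at this
    exact this.le
  have hsummable : ∀ z : C₀(ℕ, ℝ), Summable (fun k => z k • E k) := by
    intro z
    rw [summable_iff_vanishing]
    intro U hU
    obtain ⟨η, hη, hball⟩ := Metric.mem_nhds_iff.1 hU
    obtain ⟨N, hN⟩ := hztail z (η / (2 * (M + 1))) (by positivity)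
    refine ⟨Finset.range N, fun t ht => ?_⟩
    have hb : ‖∑ k ∈ t, z k • E k‖ ≤ M * (η / (2 * (M + 1))) := by
      refine hselb t (fun k => z k) _ (by positivity) (fun k hk => ?_)
      refine hN k ?_
      by_contra hlt
      push_neg at hlt
      exact (Finset.disjoint_left.1 ht hk) (Finset.mem_range.2 hlt)
    apply hball
    rw [Metric.mem_ball, dist_zero_right]
    have hfrac : M / (2 * (M + 1)) < 1 := by
      rw [div_lt_one (by linarith)]
      linarith
    calc ‖∑ k ∈ t, z k • E k‖ ≤ M * (η / (2 * (M + 1))) := hb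
      _ = (M / (2 * (M + 1))) * η := by ring
      _ < 1 * η := mul_lt_mul_of_pos_right hfrac hη
      _ = η := one_mul η
  set Tfun : C₀(ℕ, ℝ) → X := fun z => ∑' k, z k • E k with hT'
  have hTz : ∀ z, HasSum (fun k => z k • E k) (Tfun z) := fun z => (hsummable z).hasSum
  have hTadd : ∀ z w : C₀(ℕ, ℝ), Tfun (z + w) = Tfun z + Tfun w := by
    intro z w
    rw [hT']
    simp only
    rw [← Summable.tsum_add (hsummable z) (hsummable w)]
    refine tsum_congr (fun k => ?_)
    rw [ZeroAtInftyContinuousMap.coe_add]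
    simp [add_smul]
  have hTsmul : ∀ (a : ℝ) (z : C₀(ℕ, ℝ)), Tfun (a • z) = a • Tfun z := by
    intro a z
    rw [hT']
    simp only
    rw [← Summable.tsum_const_smul a (hsummable z)]
    refine tsum_congr (fun k => ?_)
    rw [ZeroAtInftyContinuousMap.coe_smul]
    simp [smul_smul]
  have hbound : ∀ z : C₀(ℕ, ℝ), ‖Tfun z‖ ≤ M * ‖z‖ := by
    intro z
    have hs := (hTz z).tendsto_sum_nat
    refine le_of_tendsto hs.norm (Filter.Eventually.of_forall (fun n => ?_))
    exact hselb (Finset.range n) (fun k => z k) ‖z‖ (norm_nonneg z) (fun k _ => habs z k)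
  set Tlin : C₀(ℕ, ℝ) →ₗ[ℝ] X :=
    { toFun := Tfun, map_add' := hTadd, map_smul' := hTsmul } with hTlin'
  set T : C₀(ℕ, ℝ) →L[ℝ] X := Tlin.mkContinuous M hbound with hTc'
  have hTapp : ∀ z, T z = Tfun z := fun z => rfl
  have hGE : ∀ k, r / 2 ≤ G k (E k) := by
    intro k
    have : G k (E k) = ‖d (nsel k)‖ := hf2 (nsel k)
    rw [this]
    exact hdnorm (nsel k)
  have hlower : ∀ (z : C₀(ℕ, ℝ)) (k : ℕ),
      |G k (Tfun z) - z k * G k (E k)| ≤ 3 * ε * ‖z‖ := by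
    intro z k
    have hs := (hTz z).tendsto_sum_nat
    have hGcont : Tendsto (fun n => G k (∑ j ∈ Finset.range n, z j • E j)) atTop
        (nhds (G k (Tfun z))) := ((G k).continuous.tendsto _).comp hs
    have habs2 : Tendsto
        (fun n => |G k (∑ j ∈ Finset.range n, z j • E j) - z k * G k (E k)|) atTop
        (nhds (|G k (Tfun z) - z k * G k (E k)|)) := (hGcont.sub_const _).abs
    refine le_of_tendsto habs2 ?_
    filter_upwards [eventually_ge_atTop (k + 1)] with n hn
    have hk : k ∈ Finset.range n := Finset.mem_range.2 (by omega)
    have hsum : G k (∑ j ∈ Finset.range n, z j • E j)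
        = ∑ j ∈ Finset.range n, z j * G k (E j) := by
      rw [map_sum]
      exact Finset.sum_congr rfl (fun j _ => by rw [map_smul, smul_eq_mul])
    rw [hsum, ← Finset.add_sum_erase _ _ hk, add_sub_cancel_left]
    calc |∑ j ∈ (Finset.range n).erase k, z j * G k (E j)|
        ≤ ∑ j ∈ (Finset.range n).erase k, |z j * G k (E j)| := Finset.abs_sum_le_sum_abs _ _
      _ ≤ ∑ j ∈ (Finset.range n).erase k, ‖z‖ * |G k (E j)| := by
          refine Finset.sum_le_sum (fun j _ => ?_)
          rw [abs_mul]
          exact mul_le_mul_of_nonneg_right (habs z j) (abs_nonneg _)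
      _ = ‖z‖ * ∑ j ∈ (Finset.range n).erase k, |G k (E j)| := by rw [Finset.mul_sum]
      _ ≤ ‖z‖ * (3 * ε) := mul_le_mul_of_nonneg_left (hoff k n) (norm_nonneg z)
      _ = 3 * ε * ‖z‖ := by ring
  refine ⟨T, r / 8, by linarith, fun z => ?_⟩
  refine le_of_forall_pos_le_add (fun δ hδ => ?_)
  by_cases hz : ‖z‖ = 0
  · rw [hz, mul_zero]
    positivity
  have hzpos : 0 < ‖z‖ := lt_of_le_of_ne (norm_nonneg z) (Ne.symm hz)
  set η : ℝ := min (2 * δ / r) ‖z‖ with hη'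
  have hηpos : 0 < η := lt_min (by positivity) hzpos
  have hη1 : η ≤ 2 * δ / r := min_le_left _ _
  have hη2 : η ≤ ‖z‖ := min_le_right _ _
  have hnorm : ‖z‖ = ⨆ k, ‖z k‖ := by
    rw [← ZeroAtInftyContinuousMap.norm_toBCF_eq_norm,
      BoundedContinuousFunction.norm_eq_iSup_norm]
    rfl
  obtain ⟨k, hk⟩ := exists_lt_of_lt_ciSup
    (show ‖z‖ - η < ⨆ k, ‖z k‖ by rw [← hnorm]; linarith)
  rw [Real.norm_eq_abs] at hk
  have h1 := hlower z k
  have h2 : |G k (Tfun z)| ≤ ‖T z‖ := by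
    have := (G k).le_opNorm (Tfun z)
    rw [hG'] at this ⊢
    rw [hf1 (nsel k), one_mul] at this
    rw [hTapp]
    calc |f (nsel k) (Tfun z)| = ‖f (nsel k) (Tfun z)‖ := (Real.norm_eq_abs _).symm
      _ ≤ ‖Tfun z‖ := this
  have hGEk := hGE k
  have h3 : (‖z‖ - η) * (r / 2) ≤ |z k * G k (E k)| := by
    rw [abs_mul]
    have hGk : |G k (E k)| = G k (E k) := abs_of_nonneg (by linarith)
    rw [hGk]
    have hzk0 : 0 ≤ ‖z‖ - η := by linarith
    exact mul_le_mul hk.le hGEk (by linarith) (abs_nonneg _)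
  have h4 : |z k * G k (E k)| - |G k (Tfun z) - z k * G k (E k)| ≤ |G k (Tfun z)| := by
    have := abs_sub_abs_le_abs_sub (z k * G k (E k)) (z k * G k (E k) - G k (Tfun z))
    have heq : z k * G k (E k) - (z k * G k (E k) - G k (Tfun z)) = G k (Tfun z) := by ring
    rw [heq] at this
    rw [abs_sub_comm] at h1
    linarith [abs_sub_comm (z k * G k (E k)) (G k (Tfun z)) ▸ this]
  have hεr : 3 * ε * ‖z‖ = 3 * r / 8 * ‖z‖ := by rw [hε']; ring
  have hηr : η * (r / 2) ≤ δ := by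
    have := mul_le_mul_of_nonneg_right hη1 (show (0:ℝ) ≤ r / 2 by linarith)
    calc η * (r / 2) ≤ 2 * δ / r * (r / 2) := this
      _ = δ := by field_simp
  nlinarith [h1, h2, h3, h4, hzpos, norm_nonneg (Tfun z)]

lemma deltaInf_zero_of_not_containsC0 (h : ¬ ContainsC0 X) :
    ∀ C : Set X, IsBounded C → deltaInf C = 0 := by
  intro C hC
  by_contra hne
  have hrpos : 0 < deltaInf C := lt_of_le_of_ne (deltaInf_nonneg C) (Ne.symm hne)
  have hdN : ∀ N : ℕ, deltaInf C ≤ deltaN C (N + 1) := deltaInf_le_deltaN C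
  have hCne : C.Nonempty := by
    by_contra hemp
    rw [Set.not_nonempty_iff_eq_empty] at hemp
    have hfam : DeltaFam C 1 = ∅ := by
      ext D
      simp only [DeltaFam, Set.mem_setOf_eq, Set.mem_empty_iff_false, iff_false]
      rintro ⟨x, hx, -⟩
      rw [hemp] at hx
      exact hx 0
    have : deltaN C 1 = 0 := by
      rw [deltaN, hfam, Set.image_empty, Real.sInf_empty]
    have h1 := hdN 0
    rw [this] at h1
    linarith
  obtain ⟨x₀, hx₀⟩ := hCne
  exact h (containsC0_of_deltaN hC hrpos hdN x₀ hx₀)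

open scoped ZeroAtInfty in
lemma exists_bad_set (h : ContainsC0 X) :
    ∃ C : Set X, IsBounded C ∧ Convex ℝ C ∧ IsClosed C ∧ deltaInf C ≠ 0 := by
  classical
  obtain ⟨T, a, ha, hlow⟩ := h
  set C : Set X := T '' (closedBall 0 1) with hC'
  have habs : ∀ (z : C₀(ℕ, ℝ)) (k : ℕ), |z k| ≤ ‖z‖ := by
    intro z k
    have := BoundedContinuousFunction.norm_coe_le_norm z.toBCF k
    rwa [ZeroAtInftyContinuousMap.norm_toBCF_eq_norm, Real.norm_eq_abs] at this
  have hCb : IsBounded C := by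
    refine (isBounded_closedBall (x := (0 : X)) (r := ‖T‖)).subset ?_
    rintro y ⟨z, hz, rfl⟩
    rw [Metric.mem_closedBall, dist_zero_right]
    rw [Metric.mem_closedBall, dist_zero_right] at hz
    calc ‖T z‖ ≤ ‖T‖ * ‖z‖ := T.le_opNorm z
      _ ≤ ‖T‖ * 1 := mul_le_mul_of_nonneg_left hz (norm_nonneg T)
      _ = ‖T‖ := mul_one _
  have hCc : Convex ℝ C := (convex_closedBall (0 : C₀(ℕ, ℝ)) 1).linear_image T.toLinearMap
  have hanti : AntilipschitzWith (a⁻¹).toNNReal T := by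
    refine T.antilipschitz_of_bound (fun z => ?_)
    rw [Real.coe_toNNReal _ (by positivity)]
    calc ‖z‖ ≤ a⁻¹ * (a * ‖z‖) := by
          rw [← mul_assoc, inv_mul_cancel₀ (ne_of_gt ha), one_mul]
      _ ≤ a⁻¹ * ‖T z‖ := mul_le_mul_of_nonneg_left (hlow z) (by positivity)
  have hclosed : IsClosed C :=
    (hanti.isClosedEmbedding T.uniformContinuous).isClosedMap _ Metric.isClosed_closedBall
  refine ⟨C, hCb, hCc, hclosed, ?_⟩
  have hkey : ∀ N : ℕ, a ≤ deltaN C (N + 1) := by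
    intro N
    have hT0 : T 0 ∈ C := ⟨0, Metric.mem_closedBall_self zero_le_one, rfl⟩
    refine le_csInf ⟨delta0 (symmSet C (fun _ : Fin (N+1) => T 0)),
      ⟨symmSet C (fun _ => T 0), ⟨fun _ => T 0, fun _ => hT0, rfl⟩, rfl⟩⟩ ?_
    rintro b ⟨D, ⟨x, hx, rfl⟩, rfl⟩
    -- choose preimages
    have hpre : ∀ n : Fin (N + 1), ∃ z : C₀(ℕ, ℝ), ‖z‖ ≤ 1 ∧ T z = x n := by
      intro n
      obtain ⟨z, hz, hzx⟩ := hx n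
      rw [Metric.mem_closedBall, dist_zero_right] at hz
      exact ⟨z, hz, hzx⟩
    choose z hz1 hz2 using hpre
    -- boundedness of the symmetrized set
    have hDb : IsBounded (symmSet C x) := by
      obtain ⟨R, hR⟩ := hCb.subset_closedBall 0
      refine (isBounded_closedBall (x := (0 : X)) (r := 2 * R)).subset (fun v hv => ?_)
      have hv0 := (Set.mem_iInter.1 hv 0)
      have h1 : x 0 + v ∈ C := hv0.1
      have e1 := hR h1
      have e2 := hR (hx 0)
      simp only [Metric.mem_closedBall, dist_zero_right] at e1 e2 ⊢
      calc ‖v‖ = ‖(x 0 + v) - x 0‖ := by rw [add_sub_cancel_left]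
        _ ≤ ‖x 0 + v‖ + ‖x 0‖ := norm_sub_le _ _
        _ ≤ 2 * R := by linarith
    refine le_of_forall_pos_le_add (fun δ hδ => ?_)
    set η : ℝ := min (δ / a) (1 / 2) with hη'
    have hηpos : 0 < η := lt_min (by positivity) (by norm_num)
    have hη1 : η ≤ δ / a := min_le_left _ _
    have hη2 : η ≤ 1 / 2 := min_le_right _ _
    -- a coordinate where all z n are small
    have hsmall : ∀ n : Fin (N + 1), ∃ Mn : ℕ, ∀ m, Mn ≤ m → |z n m| ≤ η := by
      intro n
      have hzz := zero_at_infty (F := C₀(ℕ, ℝ)) (z n)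
      rw [Filter.cocompact_eq_cofinite, Nat.cofinite_eq_atTop] at hzz
      obtain ⟨Mn, hMn⟩ := (Metric.tendsto_atTop.1 hzz) η hηpos
      refine ⟨Mn, fun m hm => ?_⟩
      have := hMn m hm
      rw [Real.dist_eq, sub_zero] at this
      exact this.le
    choose Mn hMn using hsmall
    set m : ℕ := Finset.univ.sup Mn with hm'
    have hmle : ∀ n : Fin (N + 1), Mn n ≤ m := fun n => Finset.le_sup (Finset.mem_univ n)
    -- the bump function
    set u : C₀(ℕ, ℝ) := ⟨⟨fun k => if k = m then 1 - η else 0, by continuity⟩, by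
      rw [Filter.cocompact_eq_cofinite, Nat.cofinite_eq_atTop]
      refine Filter.Tendsto.congr' ?_ tendsto_const_nhds
      filter_upwards [Filter.eventually_gt_atTop m] with k hk
      show (0:ℝ) = if k = m then 1 - η else 0
      rw [if_neg (by omega)]⟩ with hu'
    have huk : ∀ k, u k = if k = m then 1 - η else 0 := fun k => rfl
    have hunorm : 1 - η ≤ ‖u‖ := by
      have := habs u m
      rw [huk m, if_pos rfl] at this
      calc 1 - η = |1 - η| := (abs_of_nonneg (by linarith)).symm
        _ ≤ ‖u‖ := this
    -- membership of ±(T u) in the symmetrized set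
    have humem : ∀ (s : ℝ), s = 1 ∨ s = -1 → ∀ n : Fin (N + 1), ‖z n + s • u‖ ≤ 1 := by
      intro s hs n
      rw [← ZeroAtInftyContinuousMap.norm_toBCF_eq_norm]
      rw [BoundedContinuousFunction.norm_le zero_le_one]
      intro k
      have hcoe : (z n + s • u) k = z n k + s * u k := rfl
      show ‖(z n + s • u) k‖ ≤ 1
      rw [hcoe, Real.norm_eq_abs]
      by_cases hkm : k = m
      · rw [huk k, if_pos hkm]
        have h1 := hMn n k (hkm ▸ hmle n)
        have habs1 : |z n k + s * (1 - η)| ≤ |z n k| + |s| * |1 - η| := by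
          calc |z n k + s * (1 - η)| ≤ |z n k| + |s * (1 - η)| := abs_add_le _ _
            _ = |z n k| + |s| * |1 - η| := by rw [abs_mul]
        have hsabs : |s| = 1 := by rcases hs with h | h <;> simp [h]
        rw [hsabs, one_mul, abs_of_nonneg (by linarith : (0:ℝ) ≤ 1 - η)] at habs1
        linarith
      · rw [huk k, if_neg hkm, mul_zero, add_zero]
        exact le_trans (habs (z n) k) (hz1 n)
    have hmemD : ∀ (s : ℝ), s = 1 ∨ s = -1 → s • T u ∈ symmSet C x := by
      intro s hs
      rw [symmSet, Set.mem_iInter]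
      intro n
      constructor
      · show x n + s • T u ∈ C
        refine ⟨z n + s • u, ?_, ?_⟩
        · rw [Metric.mem_closedBall, dist_zero_right]
          exact humem s hs n
        · rw [map_add, map_smul, hz2 n]
      · show x n - s • T u ∈ C
        refine ⟨z n + (-s) • u, ?_, ?_⟩
        · rw [Metric.mem_closedBall, dist_zero_right]
          refine humem (-s) ?_ n
          rcases hs with h | h
          · right; rw [h]
          · left; rw [h]; norm_num
        · rw [map_add, map_smul, hz2 n]
          rw [neg_smul, ← sub_eq_add_neg]
    have h1 : T u ∈ symmSet C x := by
      have := hmemD 1 (Or.inl rfl)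
      rwa [one_smul] at this
    have h2 : -(T u) ∈ symmSet C x := by
      have := hmemD (-1) (Or.inr rfl)
      rwa [neg_one_smul] at this
    have hdist : dist (T u) (-(T u)) ≤ diam (symmSet C x) :=
      dist_le_diam_of_mem hDb h1 h2
    have hdist2 : dist (T u) (-(T u)) = 2 * ‖T u‖ := by
      rw [dist_eq_norm, sub_neg_eq_add, ← two_smul ℝ, norm_smul]
      simp
    have hTu : a * (1 - η) ≤ ‖T u‖ := by
      calc a * (1 - η) ≤ a * ‖u‖ := mul_le_mul_of_nonneg_left hunorm (le_of_lt ha)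
        _ ≤ ‖T u‖ := hlow u
    have hfin : a * (1 - η) ≤ delta0 (symmSet C x) := by
      rw [delta0]
      rw [hdist2] at hdist
      linarith
    have haη : a * η ≤ δ := by
      calc a * η ≤ a * (δ / a) := mul_le_mul_of_nonneg_left hη1 ha.le
        _ = δ := by field_simp
    nlinarith
  have hpos : 0 < deltaInf C := lt_of_lt_of_le ha (le_ciInf hkey)
  exact ne_of_gt hpos

/-- TFAE: (i) `c₀` does not embed isomorphically into `X`;
(ii) `δ_∞(C) = 0` for every bounded `C ⊆ X`;
(iii) `δ_∞(C) = 0` for every bounded, convex, closed `C ⊆ X`. -/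
theorem stmt7 :
    List.TFAE [¬ ContainsC0 X,
      ∀ C : Set X, IsBounded C → deltaInf C = 0,
      ∀ C : Set X, IsBounded C → Convex ℝ C → IsClosed C → deltaInf C = 0] := by
  tfae_have 1 → 2 := deltaInf_zero_of_not_containsC0
  tfae_have 2 → 3 := fun h C hb _ _ => h C hb
  tfae_have 3 → 1 := by
    intro h3 hcon
    obtain ⟨C, hb, hc, hcl, hne⟩ := exists_bad_set hcon
    exact hne (h3 C hb hc hcl)
  tfae_finish
end

section
/- Let X be a real Banach space and suppose T : c₀ → X is an isomorphism onto its range, i.e., T is linear and there are constants with ‖T z‖ ≤ ‖T‖·‖z‖ and ‖z‖ ≤ ‖T⁻¹‖·‖T z‖ for all z ∈ c₀. Let A := T(B_{c₀}), the image of the closed unit ball of c₀. Then for every 0 < ε < 1 and every N ∈ ℕ one has δ_N(A) ≥ (1 − ε)/‖T⁻¹‖. -/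
open Set Metric Bornology

variable {X : Type*} [NormedAddCommGroup X] [NormedSpace ℝ X] [CompleteSpace X]

open scoped ZeroAtInfty

open Filter in
noncomputable def myE (k : ℕ) (r : ℝ) : C₀(ℕ, ℝ) :=
  ⟨⟨fun m => if m = k then r else 0, continuous_of_discreteTopology⟩, by
    rw [cocompact_eq_atTop (α := ℕ)]
    refine Tendsto.congr' ?_ tendsto_const_nhds
    filter_upwards [eventually_gt_atTop k] with m hm
    simp [hm.ne']⟩

lemma myE_apply (k : ℕ) (r : ℝ) (m : ℕ) : myE k r m = if m = k then r else 0 := rfl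

lemma C0_norm_apply_le (f : C₀(ℕ, ℝ)) (m : ℕ) : ‖f m‖ ≤ ‖f‖ := by
  rw [← ZeroAtInftyContinuousMap.norm_toBCF_eq_norm]
  exact f.toBCF.norm_coe_le_norm m

lemma C0_norm_le (f : C₀(ℕ, ℝ)) (C : ℝ) (hC : 0 ≤ C) (h : ∀ m, ‖f m‖ ≤ C) : ‖f‖ ≤ C := by
  rw [← ZeroAtInftyContinuousMap.norm_toBCF_eq_norm]
  exact BoundedContinuousFunction.norm_le hC |>.mpr h

/-- if `T : c₀ → X` is an isomorphism onto its range, with `‖z‖ ≤ c·‖T z‖`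
(so `c` plays the role of `‖T⁻¹‖`), and `A = T(B_{c₀})`, then `δ_N(A) ≥ (1 - ε)/c` for every
`0 < ε < 1` and every `N`. -/
theorem stmt8 (T : C₀(ℕ, ℝ) →L[ℝ] X) (c : ℝ) (hc : 0 < c)
    (hT : ∀ z : C₀(ℕ, ℝ), ‖z‖ ≤ c * ‖T z‖)
    (ε : ℝ) (hε0 : 0 < ε) (hε1 : ε < 1) (N : ℕ) (hN : 0 < N) :
    (1 - ε) / c ≤ deltaN (T '' closedBall 0 1) N := by
  set A : Set X := T '' closedBall 0 1 with hA
  apply le_csInf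
  · refine ⟨delta0 (symmSet A fun _ : Fin N => T 0), ⟨_, ⟨fun _ => T 0, fun _ => ⟨0, by simp, rfl⟩, rfl⟩, rfl⟩⟩
  · rintro b ⟨D, ⟨x, hx, rfl⟩, rfl⟩
    have hx' : ∀ n, ∃ z ∈ closedBall (0 : C₀(ℕ, ℝ)) 1, T z = x n := hx
    choose z hz hTz using hx'
    have hz1 : ∀ n, ‖z n‖ ≤ 1 := fun n => mem_closedBall_zero_iff.mp (hz n)
    -- find a coordinate k where all |z n k| ≤ ε
    obtain ⟨k, hk⟩ : ∃ k, ∀ n, |z n k| ≤ ε := by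
      have h : ∀ᶠ m in Filter.atTop, ∀ n : Fin N, |z n m| ≤ ε := by
        rw [Filter.eventually_all]
        intro n
        have h0 := zero_at_infty (z n)
        rw [cocompact_eq_atTop (α := ℕ)] at h0
        have := Metric.tendsto_nhds.mp h0 ε hε0
        filter_upwards [this] with m hm
        simpa [Real.dist_eq] using hm.le
      exact h.exists
    set w : C₀(ℕ, ℝ) := myE k (1 - ε) with hw
    have hwk : w k = 1 - ε := by simp [hw, myE_apply]
    have hwnorm : 1 - ε ≤ ‖w‖ := by
      have := C0_norm_apply_le w k
      rw [hwk] at this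
      calc 1 - ε ≤ |1 - ε| := le_abs_self _
        _ ≤ ‖w‖ := this
    have hεle : (0:ℝ) ≤ 1 - ε := by linarith
    have hball : ∀ (s : ℝ), |s| ≤ 1 → ∀ n, z n + s • w ∈ closedBall (0 : C₀(ℕ, ℝ)) 1 := by
      intro s hs n
      rw [mem_closedBall_zero_iff]
      apply C0_norm_le _ 1 zero_le_one
      intro m
      have happ : (z n + s • w) m = z n m + s * w m := rfl
      rw [Real.norm_eq_abs, happ]
      by_cases hm : m = k
      · subst hm
        have h1 : |z n m| ≤ ε := hk n
        have h2 : |s * w m| ≤ 1 - ε := by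
          rw [hwk, abs_mul, abs_of_nonneg hεle]
          calc |s| * (1 - ε) ≤ 1 * (1 - ε) := by nlinarith [abs_nonneg s]
            _ = 1 - ε := one_mul _
        calc |z n m + s * w m| ≤ |z n m| + |s * w m| := abs_add_le _ _
          _ ≤ ε + (1 - ε) := add_le_add h1 h2
          _ = 1 := by ring
      · have : w m = 0 := by simp [hw, myE_apply, hm]
        rw [this, mul_zero, add_zero]
        exact (Real.norm_eq_abs _ ▸ C0_norm_apply_le (z n) m).trans (hz1 n)
    have habs1 : |(1:ℝ)| ≤ 1 := by norm_num
    have habsneg1 : |(-1:ℝ)| ≤ 1 := by norm_num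
    have hmemw : T w ∈ symmSet A x := by
      refine Set.mem_iInter.mpr fun n => ⟨⟨z n + w, ?_, by rw [map_add, hTz]⟩,
        ⟨z n + (-1 : ℝ) • w, ?_, ?_⟩⟩
      · simpa using hball 1 habs1 n
      · exact hball (-1) habsneg1 n
      · rw [map_add, map_smul, hTz]
        simp only [neg_one_smul]
        abel
    have hmemnegw : -T w ∈ symmSet A x := by
      refine Set.mem_iInter.mpr fun n => ⟨⟨z n + (-1 : ℝ) • w, hball (-1) habsneg1 n, ?_⟩,
        ⟨z n + w, by simpa using hball 1 habs1 n, by rw [map_add, hTz]; abel⟩⟩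
      rw [map_add, map_smul, hTz]
      simp only [neg_one_smul]
    -- boundedness of the symmetrized set
    have hbdd : IsBounded (symmSet A x) := by
      have : symmSet A x ⊆ closedBall 0 (‖T‖ + ‖x ⟨0, hN⟩‖) := by
        intro d hd
        have h1 : x ⟨0, hN⟩ + d ∈ A := (Set.mem_iInter.mp hd ⟨0, hN⟩).1
        obtain ⟨u, hu, hTu⟩ := h1
        have hu1 : ‖u‖ ≤ 1 := mem_closedBall_zero_iff.mp hu
        have hTnorm : ‖x ⟨0, hN⟩ + d‖ ≤ ‖T‖ := by
          rw [← hTu]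
          calc ‖T u‖ ≤ ‖T‖ * ‖u‖ := T.le_opNorm u
            _ ≤ ‖T‖ * 1 := by nlinarith [norm_nonneg T]
            _ = ‖T‖ := mul_one _
        rw [mem_closedBall_zero_iff]
        calc ‖d‖ = ‖(x ⟨0, hN⟩ + d) - x ⟨0, hN⟩‖ := by congr 1; abel
          _ ≤ ‖x ⟨0, hN⟩ + d‖ + ‖x ⟨0, hN⟩‖ := norm_sub_le _ _
          _ ≤ ‖T‖ + ‖x ⟨0, hN⟩‖ := by linarith
      exact (isBounded_closedBall).subset this
    -- diameter lower bound
    have hdist : dist (T w) (-T w) ≤ diam (symmSet A x) := dist_le_diam_of_mem hbdd hmemw hmemnegw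
    have hdisteq : dist (T w) (-T w) = 2 * ‖T w‖ := by
      rw [dist_eq_norm]
      have : T w - (-T w) = (2:ℝ) • T w := by module
      rw [this, norm_smul]
      norm_num
    have hTwlb : (1 - ε) / c ≤ ‖T w‖ := by
      rw [div_le_iff₀ hc]
      have := hT w
      nlinarith
    rw [delta0]
    rw [hdisteq] at hdist
    linarith
end

section
/- (James distortion theorem) Let X be a real Banach space. If X contains an isomorphic copy of c₀, then X contains almost isometric copies of c₀: for every ε > 0 there exist a closed linear subspace Y ⊆ X and an isomorphism T : c₀ → Y with ‖T‖·‖T⁻¹‖ ≤ 1 + ε. -/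
open Set Metric Bornology

variable {X : Type*} [NormedAddCommGroup X] [NormedSpace ℝ X] [CompleteSpace X]

open scoped ZeroAtInfty

namespace JamesC0

open Filter Topology

lemma c0_coe_le_norm (f : C₀(ℕ, ℝ)) (n : ℕ) : |f n| ≤ ‖f‖ := by
  rw [← ZeroAtInftyContinuousMap.norm_toBCF_eq_norm]
  exact f.toBCF.norm_coe_le_norm n

lemma c0_norm_le (f : C₀(ℕ, ℝ)) {C : ℝ} (hC : 0 ≤ C) (h : ∀ n, |f n| ≤ C) : ‖f‖ ≤ C := by
  rw [← ZeroAtInftyContinuousMap.norm_toBCF_eq_norm]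
  exact (BoundedContinuousFunction.norm_le hC).mpr h

noncomputable def sing (N : ℕ) : C₀(ℕ, ℝ) :=
  ⟨⟨fun m => if m = N then 1 else 0, continuous_of_discreteTopology⟩, by
    show Filter.Tendsto _ (Filter.cocompact ℕ) (nhds 0)
    rw [cocompact_eq_cofinite]
    apply Filter.Tendsto.congr' _ tendsto_const_nhds
    rw [Filter.EventuallyEq, Filter.eventually_cofinite]
    apply Set.Finite.subset (Set.finite_singleton N)
    intro m hm
    simp only [Set.mem_setOf_eq] at hm
    by_contra h
    exact hm ((if_neg h).symm)⟩

@[simp] lemma sing_apply (N m : ℕ) : sing N m = if m = N then 1 else 0 := rfl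

lemma sing_norm (N : ℕ) : ‖sing N‖ = 1 := by
  apply le_antisymm
  · apply c0_norm_le _ zero_le_one
    intro n
    simp only [sing_apply]
    split <;> simp
  · have := c0_coe_le_norm (sing N) N
    simpa using this

lemma exists_max (f : C₀(ℕ, ℝ)) : ∃ m : ℕ, ∀ k, |f k| ≤ |f m| := by
  by_cases hf : ∀ n, f n = 0
  · exact ⟨0, fun k => by simp [hf]⟩
  push_neg at hf
  obtain ⟨n₀, hn₀⟩ := hf
  have hpos : 0 < |f n₀| := abs_pos.mpr hn₀
  have hcof : ∀ᶠ k in Filter.cofinite, |f k| < |f n₀| := by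
    have h0 := ZeroAtInftyContinuousMap.zero_at_infty' f
    rw [cocompact_eq_cofinite] at h0
    have h1 : Filter.Tendsto (fun k => |f k|) Filter.cofinite (nhds 0) := by
      simpa using h0.abs
    exact h1.eventually_lt_const hpos
  have hfin : {k | ¬ |f k| < |f n₀|}.Finite := hcof
  set A := hfin.toFinset with hA
  have hne : A.Nonempty := ⟨n₀, by simp [hA, Set.Finite.mem_toFinset, lt_irrefl]⟩
  obtain ⟨m, hmA, hm⟩ := A.exists_max_image (fun k => |f k|) hne
  refine ⟨m, fun k => ?_⟩
  by_cases hk : k ∈ A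
  · exact hm k hk
  · have hk2 : |f k| < |f n₀| := by
      by_contra h
      exact hk (hfin.mem_toFinset.mpr h)
    have h2 : |f n₀| ≤ |f m| := hm n₀ (hfin.mem_toFinset.mpr (lt_irrefl _))
    linarith

lemma norm_eq_max (f : C₀(ℕ, ℝ)) {m : ℕ} (h : ∀ k, |f k| ≤ |f m|) : ‖f‖ = |f m| :=
  le_antisymm (c0_norm_le f (abs_nonneg _) h) (c0_coe_le_norm f m)

def evalAM (n : ℕ) : C₀(ℕ, ℝ) →+ ℝ :=
  { toFun := fun f => f n, map_zero' := rfl, map_add' := fun _ _ => rfl }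

lemma c0_sum_apply (F : Finset ℕ) (f : ℕ → C₀(ℕ, ℝ)) (n : ℕ) :
    (∑ k ∈ F, f k) n = ∑ k ∈ F, f k n :=
  map_sum (evalAM n) f F

variable {X : Type*} [NormedAddCommGroup X] [NormedSpace ℝ X] [CompleteSpace X]

lemma jamesCore (T : C₀(ℕ, ℝ) →L[ℝ] X) (a : ℝ) (ha : 0 < a)
    (hlb : ∀ z, a * ‖z‖ ≤ ‖T z‖) (s : ℝ) (hs1 : 1 < s) (hs2 : s ^ 2 < 2) :
    ∃ (S : C₀(ℕ, ℝ) →L[ℝ] X) (t : ℝ), 0 < t ∧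
      (∀ z, t * (2 / s - s) * ‖z‖ ≤ ‖S z‖) ∧ (∀ z, ‖S z‖ ≤ t * s * ‖z‖) := by
  have hs0 : 0 < s := lt_trans one_pos hs1
  -- the sets P N and the quantities tN
  set P : ℕ → Set C₀(ℕ, ℝ) := fun N =>
    {z | ‖z‖ ≤ 1 ∧ (∀ n, n < N → z n = 0) ∧ ∃ M, ∀ n, M ≤ n → z n = 0} with hP
  set tN : ℕ → ℝ := fun N => sSup ((fun z => ‖T z‖) '' P N) with htN
  have hPne : ∀ N, ((fun z => ‖T z‖) '' P N).Nonempty := by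
    intro N
    exact ⟨‖T 0‖, 0, ⟨by simp, fun n _ => rfl, 0, fun n _ => rfl⟩, rfl⟩
  have hPbdd : ∀ N, BddAbove ((fun z => ‖T z‖) '' P N) := by
    intro N
    refine ⟨‖T‖, ?_⟩
    rintro y ⟨z, hz, rfl⟩
    calc ‖T z‖ ≤ ‖T‖ * ‖z‖ := T.le_opNorm z
      _ ≤ ‖T‖ * 1 := by
          apply mul_le_mul_of_nonneg_left hz.1 (norm_nonneg T)
      _ = ‖T‖ := mul_one _
  have hsingP : ∀ N, sing N ∈ P N := by
    intro N
    refine ⟨le_of_eq (sing_norm N), fun n hn => ?_, N + 1, fun n hn => ?_⟩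
    · simp only [sing_apply]
      exact if_neg (by omega)
    · simp only [sing_apply]
      exact if_neg (by omega)
  have htNa : ∀ N, a ≤ tN N := by
    intro N
    have h1 : a ≤ ‖T (sing N)‖ := by
      have := hlb (sing N)
      rwa [sing_norm, mul_one] at this
    exact le_trans h1 (le_csSup (hPbdd N) ⟨sing N, hsingP N, rfl⟩)
  -- t := inf tN
  set t : ℝ := ⨅ N, tN N with htdef
  have hbddb : BddBelow (Set.range tN) := ⟨a, by rintro y ⟨N, rfl⟩; exact htNa N⟩
  have hta : a ≤ t := le_ciInf htNa
  have ht0 : 0 < t := lt_of_lt_of_le ha hta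
  have htle : ∀ N, t ≤ tN N := fun N => ciInf_le hbddb N
  -- choose N₀ with tN N₀ < t * s
  have hts : t < t * s := by nlinarith
  obtain ⟨N₀, hN₀⟩ : ∃ N₀, tN N₀ < t * s := exists_lt_of_ciInf_lt hts
  -- the selection of blocks
  have hEX : ∀ N : ℕ, ∃ p : C₀(ℕ, ℝ) × ℕ,
      p.1 ∈ P N ∧ t / s < ‖T p.1‖ ∧ ∀ n, p.2 ≤ n → p.1 n = 0 := by
    intro N
    have h1 : t / s < tN N := by
      have : t / s < t := by
        rw [div_lt_iff₀ hs0]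
        nlinarith
      exact lt_of_lt_of_le this (htle N)
    obtain ⟨y, ⟨z, hzP, rfl⟩, hy⟩ := exists_lt_of_lt_csSup (hPne N) h1
    obtain ⟨M, hM⟩ := hzP.2.2
    exact ⟨(z, M), hzP, hy, hM⟩
  choose p hp1 hp2 hp3 using hEX
  -- the index sequence g and blocks z
  set g : ℕ → ℕ := fun k => Nat.rec N₀ (fun _ gk => max (gk + 1) (p gk).2) k with hg
  have hg0 : g 0 = N₀ := rfl
  have hgsucc : ∀ k, g (k + 1) = max (g k + 1) (p (g k)).2 := fun k => rfl
  set z : ℕ → C₀(ℕ, ℝ) := fun k => (p (g k)).1 with hz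
  have hgmono : StrictMono g := by
    apply strictMono_nat_of_lt_succ
    intro k
    rw [hgsucc]
    omega
  have hgN₀ : ∀ k, N₀ ≤ g k := by
    intro k
    rw [← hg0]
    exact hgmono.monotone (Nat.zero_le k)
  have hz1 : ∀ k, ‖z k‖ ≤ 1 := fun k => (hp1 (g k)).1
  have hzlo : ∀ k n, n < g k → z k n = 0 := fun k => (hp1 (g k)).2.1
  have hzhi : ∀ k n, g (k + 1) ≤ n → z k n = 0 := by
    intro k n hn
    apply hp3 (g k)
    rw [hgsucc] at hn
    omega
  have hzT : ∀ k, t / s < ‖T (z k)‖ := fun k => hp2 (g k)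
  -- disjointness of supports
  have hdisj : ∀ j k n, j < k → z k n ≠ 0 → z j n = 0 := by
    intro j k n hjk hzn
    have h1 : g k ≤ n := by
      by_contra h
      exact hzn (hzlo k n (not_le.mp h))
    have h2 : g (j + 1) ≤ g k := hgmono.monotone (Nat.succ_le_of_lt hjk)
    exact hzhi j n (le_trans h2 h1)
  -- pointwise bound for combinations
  have hpt : ∀ (F : Finset ℕ) (b : ℕ → ℝ) (m : ℝ), 0 ≤ m → (∀ k ∈ F, |b k| ≤ m) →
      ∀ n, |(∑ k ∈ F, b k • z k) n| ≤ m := by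
    intro F b m hm hb n
    rw [c0_sum_apply]
    by_cases hex : ∃ k ∈ F, z k n ≠ 0
    · obtain ⟨k₀, hk₀F, hk₀⟩ := hex
      have hsum : ∑ k ∈ F, (b k • z k) n = (b k₀ • z k₀) n := by
        apply Finset.sum_eq_single_of_mem k₀ hk₀F
        intro j hjF hne
        show b j • z j n = 0
        rcases lt_or_gt_of_ne hne with h | h
        · rw [hdisj j k₀ n h hk₀]; simp
        · by_cases hzj : z j n = 0
          · rw [hzj]; simp
          · exact absurd (hdisj k₀ j n h hzj) hk₀
      rw [hsum]
      show |b k₀ * z k₀ n| ≤ m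
      rw [abs_mul]
      calc |b k₀| * |z k₀ n| ≤ m * 1 := by
            apply mul_le_mul (hb k₀ hk₀F) ?_ (abs_nonneg _) hm
            calc |z k₀ n| ≤ ‖z k₀‖ := c0_coe_le_norm _ n
              _ ≤ 1 := hz1 k₀
        _ = m := mul_one m
    · push_neg at hex
      have : ∀ k ∈ F, (b k • z k) n = 0 := by
        intro k hk
        show b k * z k n = 0
        rw [hex k hk, mul_zero]
      rw [Finset.sum_congr rfl this]
      simpa using hm
  -- zero below N₀ and finite support for combinations
  have hcomb_mem : ∀ (F : Finset ℕ) (b : ℕ → ℝ), (∀ k ∈ F, |b k| ≤ 1) →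
      (∑ k ∈ F, b k • z k) ∈ P N₀ := by
    intro F b hb
    refine ⟨c0_norm_le _ zero_le_one (hpt F b 1 zero_le_one hb), ?_, ?_⟩
    · intro n hn
      rw [c0_sum_apply]
      apply Finset.sum_eq_zero
      intro k hk
      show b k * z k n = 0
      rw [hzlo k n (lt_of_lt_of_le hn (hgN₀ k)), mul_zero]
    · refine ⟨g ((F.sup id) + 1), fun n hn => ?_⟩
      rw [c0_sum_apply]
      apply Finset.sum_eq_zero
      intro k hk
      show b k * z k n = 0
      have h1 : g (k + 1) ≤ g (F.sup id + 1) :=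
        hgmono.monotone (Nat.succ_le_succ (Finset.le_sup (f := id) hk))
      rw [hzhi k n (le_trans h1 hn), mul_zero]
  -- upper bound for combinations
  have hupper : ∀ (F : Finset ℕ) (b : ℕ → ℝ) (m : ℝ), 0 ≤ m → (∀ k ∈ F, |b k| ≤ m) →
      ‖T (∑ k ∈ F, b k • z k)‖ ≤ t * s * m := by
    intro F b m hm hb
    rcases eq_or_lt_of_le hm with hm0 | hm0
    · have hb0 : ∀ k ∈ F, b k = 0 := by
        intro k hk
        have := hb k hk
        rw [← hm0] at this
        exact abs_eq_zero.mp (le_antisymm this (abs_nonneg _))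
      have : ∑ k ∈ F, b k • z k = 0 := by
        apply Finset.sum_eq_zero
        intro k hk
        rw [hb0 k hk, zero_smul]
      rw [this, map_zero, norm_zero, ← hm0, mul_zero]
    · set w : C₀(ℕ, ℝ) := ∑ k ∈ F, (b k / m) • z k with hw
      have hwP : w ∈ P N₀ := by
        apply hcomb_mem
        intro k hk
        rw [abs_div, abs_of_pos hm0, div_le_one hm0]
        exact hb k hk
      have h1 : ‖T w‖ ≤ tN N₀ := le_csSup (hPbdd N₀) ⟨w, hwP, rfl⟩
      have h2 : ∑ k ∈ F, b k • z k = m • w := by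
        rw [hw, Finset.smul_sum]
        apply Finset.sum_congr rfl
        intro k hk
        rw [smul_smul]
        congr 1
        field_simp
      rw [h2, map_smul, norm_smul, Real.norm_eq_abs, abs_of_pos hm0]
      calc m * ‖T w‖ ≤ m * (t * s) := by
            apply mul_le_mul_of_nonneg_left (le_trans h1 (le_of_lt hN₀)) (le_of_lt hm0)
        _ = t * s * m := by ring
  -- lower bound for combinations
  have hlower : ∀ (F : Finset ℕ) (b : ℕ → ℝ) (k₀ : ℕ), k₀ ∈ F → (∀ k ∈ F, |b k| ≤ |b k₀|) →
      t * (2 / s - s) * |b k₀| ≤ ‖T (∑ k ∈ F, b k • z k)‖ := by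
    intro F b k₀ hk₀F hb
    set c : ℕ → ℝ := fun k => if k = k₀ then b k else -b k with hc
    have hcabs : ∀ k ∈ F, |c k| ≤ |b k₀| := by
      intro k hk
      by_cases h : k = k₀
      · simp only [hc]
        rw [if_pos h]
        exact hb k hk
      · simp only [hc]
        rw [if_neg h, abs_neg]
        exact hb k hk
    have hsum : (∑ k ∈ F, b k • z k) + (∑ k ∈ F, c k • z k) = (2 * b k₀) • z k₀ := by
      rw [← Finset.sum_add_distrib]
      have : ∀ k ∈ F, b k • z k + c k • z k = if k = k₀ then (2 * b k₀) • z k₀ else 0 := by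
        intro k hk
        by_cases h : k = k₀
        · subst h
          rw [if_pos rfl]
          have hck : c k = b k := by simp [hc]
          rw [hck]
          module
        · rw [if_neg h]
          have hck : c k = -b k := by simp [hc, h]
          rw [hck]
          module
      rw [Finset.sum_congr rfl this, Finset.sum_ite_eq' F k₀, if_pos hk₀F]
    have h1 : ‖T (∑ k ∈ F, c k • z k)‖ ≤ t * s * |b k₀| :=
      hupper F c (|b k₀|) (abs_nonneg _) hcabs
    have h2 : 2 * |b k₀| * (t / s) ≤ ‖T ((2 * b k₀) • z k₀)‖ := by
      rw [map_smul, norm_smul, Real.norm_eq_abs, abs_mul, abs_two]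
      calc 2 * |b k₀| * (t / s) ≤ 2 * |b k₀| * ‖T (z k₀)‖ := by
            apply mul_le_mul_of_nonneg_left (le_of_lt (hzT k₀)) (by positivity)
        _ = 2 * |b k₀| * ‖T (z k₀)‖ := rfl
    have h3 : ‖T ((2 * b k₀) • z k₀)‖ ≤ ‖T (∑ k ∈ F, b k • z k)‖ + ‖T (∑ k ∈ F, c k • z k)‖ := by
      rw [← hsum, map_add]
      exact norm_add_le _ _
    have heq : t * (2 / s - s) * |b k₀| = 2 * |b k₀| * (t / s) - t * s * |b k₀| := by
      field_simp
    linarith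
  -- summability
  have hts0 : 0 < t * s := by positivity
  have hsummable : ∀ z' : C₀(ℕ, ℝ), Summable (fun k => z' k • T (z k)) := by
    intro z'
    rw [summable_iff_vanishing]
    intro e he
    obtain ⟨ε, hε, hball⟩ := Metric.mem_nhds_iff.mp he
    set ε' : ℝ := ε / (2 * (t * s + 1)) with hε'
    have hε'0 : 0 < ε' := by positivity
    have hcof : ∀ᶠ k in Filter.cofinite, |z' k| < ε' := by
      have h0 := ZeroAtInftyContinuousMap.zero_at_infty' z'
      rw [cocompact_eq_cofinite] at h0
      have h1 : Filter.Tendsto (fun k => |z' k|) Filter.cofinite (nhds 0) := by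
        simpa using h0.abs
      exact h1.eventually_lt_const hε'0
    have hfin : {k | ¬ |z' k| < ε'}.Finite := hcof
    refine ⟨hfin.toFinset, fun G hG => ?_⟩
    apply hball
    rw [mem_ball_zero_iff]
    have hGsmall : ∀ k ∈ G, |z' k| ≤ ε' := by
      intro k hk
      by_contra h
      have : k ∈ hfin.toFinset := hfin.mem_toFinset.mpr (fun hlt => h (le_of_lt hlt))
      exact (Finset.disjoint_left.mp hG hk) this
    have heq : ∑ k ∈ G, z' k • T (z k) = T (∑ k ∈ G, z' k • z k) := by
      rw [map_sum]
      apply Finset.sum_congr rfl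
      intro k _
      rw [map_smul]
    rw [heq]
    calc ‖T (∑ k ∈ G, z' k • z k)‖ ≤ t * s * ε' := hupper G (fun k => z' k) ε' (le_of_lt hε'0) hGsmall
      _ < ε := by
          have hD : (0:ℝ) < 2 * (t * s + 1) := by positivity
          rw [hε', mul_div_assoc', div_lt_iff₀ hD]
          nlinarith
  -- the linear map
  set Slin : C₀(ℕ, ℝ) →ₗ[ℝ] X :=
    { toFun := fun z' => ∑' k, z' k • T (z k),
      map_add' := by
        intro z₁ z₂
        have : ∀ k, ((z₁ + z₂) k) • T (z k) = z₁ k • T (z k) + z₂ k • T (z k) := by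
          intro k
          show ((z₁ : ℕ → ℝ) k + z₂ k) • T (z k) = _
          rw [add_smul]
        simp_rw [this]
        exact Summable.tsum_add (hsummable z₁) (hsummable z₂),
      map_smul' := by
        intro c z'
        have : ∀ k, ((c • z') k) • T (z k) = c • (z' k • T (z k)) := by
          intro k
          show (c * z' k) • T (z k) = _
          rw [mul_smul]
        simp_rw [this]
        exact Summable.tsum_const_smul c (hsummable z') } with hSlin
  have hSapp : ∀ z', Slin z' = ∑' k, z' k • T (z k) := fun _ => rfl
  -- partial sums converge
  have hpartial : ∀ z' : C₀(ℕ, ℝ),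
      Filter.Tendsto (fun F : Finset ℕ => ‖T (∑ k ∈ F, z' k • z k)‖) Filter.atTop (nhds ‖Slin z'‖) := by
    intro z'
    have h1 : HasSum (fun k => z' k • T (z k)) (Slin z') := (hsummable z').hasSum
    have h2 : ∀ F : Finset ℕ, ∑ k ∈ F, z' k • T (z k) = T (∑ k ∈ F, z' k • z k) := by
      intro F
      rw [map_sum]
      apply Finset.sum_congr rfl
      intro k _
      rw [map_smul]
    have h3 := h1.norm
    exact h3.congr fun F => congrArg norm (h2 F)
  -- the two norm bounds
  have hSup : ∀ z', ‖Slin z'‖ ≤ t * s * ‖z'‖ := by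
    intro z'
    apply le_of_tendsto (hpartial z')
    apply Filter.Eventually.of_forall
    intro F
    exact hupper F (fun k => z' k) ‖z'‖ (norm_nonneg _) (fun k _ => c0_coe_le_norm z' k)
  have hSlow : ∀ z', t * (2 / s - s) * ‖z'‖ ≤ ‖Slin z'‖ := by
    intro z'
    obtain ⟨m, hm⟩ := exists_max z'
    rw [norm_eq_max z' hm]
    apply ge_of_tendsto (hpartial z')
    filter_upwards [Filter.eventually_ge_atTop ({m} : Finset ℕ)] with F hF
    exact hlower F (fun k => z' k) m (Finset.singleton_subset_iff.mp hF) (fun k _ => hm k)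
  exact ⟨Slin.mkContinuous (t * s) hSup, t, ht0, hSlow, hSup⟩
lemma jamesAssemble (S : C₀(ℕ, ℝ) →L[ℝ] X) (L U : ℝ) (hL : 0 < L) (hU : 0 ≤ U)
    (hlow : ∀ z, L * ‖z‖ ≤ ‖S z‖) (hup : ∀ z, ‖S z‖ ≤ U * ‖z‖) :
    ∃ Y : Submodule ℝ X, IsClosed (Y : Set X) ∧
      ∃ T : C₀(ℕ, ℝ) ≃L[ℝ] Y,
        ‖(T : C₀(ℕ, ℝ) →L[ℝ] Y)‖ * ‖(T.symm : Y →L[ℝ] C₀(ℕ, ℝ))‖ ≤ U / L := by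
  have key : ∀ z : C₀(ℕ, ℝ), ‖z‖ ≤ L⁻¹ * ‖S z‖ := by
    intro z
    rw [inv_mul_eq_div, le_div_iff₀ hL, mul_comm]
    exact hlow z
  have inj : Function.Injective S := by
    intro x y hxy
    have h1 := key (x - y)
    rw [map_sub, hxy, sub_self, norm_zero, mul_zero] at h1
    rw [← sub_eq_zero]
    exact norm_le_zero_iff.mp h1
  have anti : AntilipschitzWith (L⁻¹).toNNReal S := by
    apply S.antilipschitz_of_bound
    intro z
    rw [Real.coe_toNNReal _ (by positivity)]
    exact key z
  refine ⟨LinearMap.range (S : C₀(ℕ, ℝ) →ₗ[ℝ] X), ?_, ?_⟩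
  · have h : ((LinearMap.range (S : C₀(ℕ, ℝ) →ₗ[ℝ] X)) : Set X) = Set.range S := by
      rw [LinearMap.coe_range]; rfl
    rw [h]
    exact anti.isClosed_range S.uniformContinuous
  · set e₀ := LinearEquiv.ofInjective (S : C₀(ℕ, ℝ) →ₗ[ℝ] X) inj with he₀
    have he₀app : ∀ z, ((e₀ z : X)) = S z := fun z => rfl
    have hto : ∀ z, ‖e₀ z‖ ≤ U * ‖z‖ := by
      intro z
      calc ‖e₀ z‖ = ‖(e₀ z : X)‖ := rfl
        _ = ‖S z‖ := by rw [he₀app]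
        _ ≤ U * ‖z‖ := hup z
    have hinv : ∀ y : LinearMap.range (S : C₀(ℕ, ℝ) →ₗ[ℝ] X), ‖e₀.symm y‖ ≤ L⁻¹ * ‖y‖ := by
      intro y
      have h2 : (S (e₀.symm y) : X) = (y : X) := by
        rw [← he₀app, e₀.apply_symm_apply]
      calc ‖e₀.symm y‖ ≤ L⁻¹ * ‖S (e₀.symm y)‖ := key _
        _ = L⁻¹ * ‖y‖ := by rw [h2]; rfl
    refine ⟨e₀.toContinuousLinearEquivOfBounds U L⁻¹ hto hinv, ?_⟩
    set e := e₀.toContinuousLinearEquivOfBounds U L⁻¹ hto hinv with he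
    have h1 : ‖(e : C₀(ℕ, ℝ) →L[ℝ] LinearMap.range (S : C₀(ℕ, ℝ) →ₗ[ℝ] X))‖ ≤ U :=
      ContinuousLinearMap.opNorm_le_bound _ hU hto
    have h2 : ‖(e.symm : LinearMap.range (S : C₀(ℕ, ℝ) →ₗ[ℝ] X) →L[ℝ] C₀(ℕ, ℝ))‖ ≤ L⁻¹ :=
      ContinuousLinearMap.opNorm_le_bound _ (by positivity) hinv
    calc ‖(e : C₀(ℕ, ℝ) →L[ℝ] LinearMap.range (S : C₀(ℕ, ℝ) →ₗ[ℝ] X))‖ * ‖(e.symm : LinearMap.range (S : C₀(ℕ, ℝ) →ₗ[ℝ] X) →L[ℝ] C₀(ℕ, ℝ))‖ ≤ U * L⁻¹ :=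
          mul_le_mul h1 h2 (ContinuousLinearMap.opNorm_nonneg _) hU
      _ = U / L := by rw [div_eq_mul_inv]

lemma jamesMain (h : ∃ T : C₀(ℕ, ℝ) →L[ℝ] X, ∃ a : ℝ, 0 < a ∧ ∀ z : C₀(ℕ, ℝ), a * ‖z‖ ≤ ‖T z‖) :
    ∀ ε : ℝ, 0 < ε → ∃ Y : Submodule ℝ X, IsClosed (Y : Set X) ∧
      ∃ T : C₀(ℕ, ℝ) ≃L[ℝ] Y,
        ‖(T : C₀(ℕ, ℝ) →L[ℝ] Y)‖ * ‖(T.symm : Y →L[ℝ] C₀(ℕ, ℝ))‖ ≤ 1 + ε := by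
  intro ε hε
  obtain ⟨T, a, ha, hlb⟩ := h
  set A : ℝ := 2 * (1 + ε) / (2 + ε) with hA
  have hA1 : 1 < A := by
    rw [hA, lt_div_iff₀ (by linarith)]
    linarith
  have hA2 : A < 2 := by
    rw [hA, div_lt_iff₀ (by linarith)]
    linarith
  set s : ℝ := Real.sqrt A with hsdef
  have hA0 : (0:ℝ) ≤ A := by linarith
  have hsq : s ^ 2 = A := Real.sq_sqrt hA0
  have hs1 : 1 < s := by
    rw [hsdef]
    rw [show (1:ℝ) = Real.sqrt 1 from (Real.sqrt_one).symm]
    exact Real.sqrt_lt_sqrt zero_le_one hA1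
  have hs2 : s ^ 2 < 2 := by rw [hsq]; exact hA2
  have hs0 : 0 < s := lt_trans one_pos hs1
  obtain ⟨S, t, ht0, hlow, hup⟩ := jamesCore T a ha hlb s hs1 hs2
  have hL0 : 0 < t * (2 / s - s) := by
    apply mul_pos ht0
    rw [sub_pos, lt_div_iff₀ hs0]
    nlinarith
  have hU0 : (0:ℝ) ≤ t * s := by positivity
  obtain ⟨Y, hY, e, he⟩ := jamesAssemble S (t * (2 / s - s)) (t * s) hL0 hU0 hlow hup
  refine ⟨Y, hY, e, le_trans he ?_⟩
  have hratio : t * s / (t * (2 / s - s)) = s ^ 2 / (2 - s ^ 2) := by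
    rw [div_eq_div_iff (by positivity) (by nlinarith)]
    field_simp
  rw [hratio, hsq]
  have hAe : A * (2 + ε) = 2 * (1 + ε) := by
    rw [hA]
    field_simp
  rw [div_le_iff₀ (by nlinarith)]
  nlinarith [hAe]

end JamesC0


/-- James distortion theorem: if `X` contains an isomorphic copy of `c₀`, then
for every `ε > 0` there are a closed subspace `Y ⊆ X` and an isomorphism `T : c₀ → Y` with
`‖T‖·‖T⁻¹‖ ≤ 1 + ε`. -/
theorem stmt9 (h : ContainsC0 X) :
    ∀ ε : ℝ, 0 < ε → ∃ Y : Submodule ℝ X, IsClosed (Y : Set X) ∧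
      ∃ T : C₀(ℕ, ℝ) ≃L[ℝ] Y,
        ‖(T : C₀(ℕ, ℝ) →L[ℝ] Y)‖ * ‖(T.symm : Y →L[ℝ] C₀(ℕ, ℝ))‖ ≤ 1 + ε := by
  exact JamesC0.jamesMain h
end

section
/- (Bessaga–Pełczyński) Let X be a real Banach space not containing an isomorphic copy of c₀, and let (xₙ)_{n∈ℕ} be a sequence in X such that the series Σₙ xₙ is weakly unconditionally Cauchy, i.e., Σₙ |x*(xₙ)| < ∞ for every x* ∈ X*. Then the series Σₙ xₙ converges unconditionally: for every choice of signs θₙ ∈ {−1, 1}, the series Σₙ θₙ xₙ converges in X. -/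
open Set Metric Bornology

variable {X : Type*} [NormedAddCommGroup X] [NormedSpace ℝ X] [CompleteSpace X]

section Aux

lemma rosenthal_matrix (A : ℕ → ℕ → ℝ) (hA : ∀ k j, 0 ≤ A k j) (M : ℝ)
    (hM : ∀ (k : ℕ) (G : Finset ℕ), ∑ j ∈ G, A k j ≤ M) {ε : ℝ} (hε : 0 < ε) :
    ∃ S : Set ℕ, S.Infinite ∧ ∀ k ∈ S, ∀ G : Finset ℕ, ↑G ⊆ S \ {k} →
      ∑ j ∈ G, A k j ≤ ε := by
  by_contra hbad
  push_neg at hbad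
  -- every infinite set fails self-goodness
  have hfail : ∀ T : Set ℕ, T.Infinite →
      ∃ k ∈ T, ∃ G : Finset ℕ, ↑G ⊆ T \ {k} ∧ ε < ∑ j ∈ G, A k j := by
    intro T hT
    obtain ⟨k, hk, G, hG, hGe⟩ := hbad T hT
    exact ⟨k, hk, G, hG, hGe⟩
  -- invariant construction
  have step : ∀ r : ℕ, ∀ T : Set ℕ, T.Infinite →
      (∀ k ∈ T, ∃ B : Finset ℕ, (↑B ∩ T : Set ℕ) = ∅ ∧ (r : ℝ) * ε ≤ ∑ j ∈ B, A k j) →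
      ∃ T' : Set ℕ, T' ⊆ T ∧ T'.Infinite ∧
      (∀ k ∈ T', ∃ B : Finset ℕ, (↑B ∩ T' : Set ℕ) = ∅ ∧ ((r : ℝ) + 1) * ε ≤ ∑ j ∈ B, A k j) := by
    intro r T hT hinv
    set emb := hT.natEmbedding with hemb
    set part : ℕ → Set ℕ := fun i => Set.range (fun j => (emb (Nat.pair i j) : ℕ)) with hpart
    have hpartT : ∀ i, part i ⊆ T := by
      rintro i m ⟨j, rfl⟩; exact (emb (Nat.pair i j)).2
    have hpartinj : ∀ i i' j j', (emb (Nat.pair i j) : ℕ) = (emb (Nat.pair i' j') : ℕ) →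
        i = i' ∧ j = j' := by
      intro i i' j j' hh
      have := emb.injective (Subtype.ext hh)
      exact Nat.pair_eq_pair.mp this
    have hpartdisj : ∀ i i', i ≠ i' → part i ∩ part i' = ∅ := by
      intro i i' hne
      ext m; simp only [mem_inter_iff, mem_empty_iff_false, iff_false]
      rintro ⟨⟨j, rfl⟩, ⟨j', hj'⟩⟩
      exact hne ((hpartinj i' i j' j hj').1.symm)
    have hpartinf : ∀ i, (part i).Infinite := by
      intro i
      apply Set.infinite_range_of_injective
      intro j j' hjj'
      exact (hpartinj i i j j' hjj').2
    -- witnesses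
    have hw : ∀ i, ∃ k ∈ part i, ∃ G : Finset ℕ, ↑G ⊆ part i \ {k} ∧ ε < ∑ j ∈ G, A k j :=
      fun i => hfail (part i) (hpartinf i)
    choose k hkmem G hGsub hGsum using hw
    have hkinj : Function.Injective k := by
      intro i i' hki
      by_contra hne
      have := hpartdisj i i' hne
      have : k i ∈ part i ∩ part i' := ⟨hkmem i, hki ▸ hkmem i'⟩
      rw [hpartdisj i i' hne] at this
      exact this
    refine ⟨Set.range k, ?_, Set.infinite_range_of_injective hkinj, ?_⟩
    · rintro m ⟨i, rfl⟩; exact hpartT i (hkmem i)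
    · rintro m ⟨i, rfl⟩
      obtain ⟨B, hBT, hBsum⟩ := hinv (k i) (hpartT i (hkmem i))
      refine ⟨B ∪ G i, ?_, ?_⟩
      · ext m; simp only [Finset.coe_union, mem_inter_iff, mem_union, mem_empty_iff_false,
          iff_false, not_and]
        rintro (hmB | hmG) ⟨i', rfl⟩
        · have : k i' ∈ (↑B ∩ T : Set ℕ) := ⟨hmB, hpartT i' (hkmem i')⟩
          rw [hBT] at this; exact this
        · have h1 := hGsub i hmG
          rcases h1 with ⟨h1a, h1b⟩
          by_cases hii : i' = i
          · subst hii; exact h1b rfl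
          · have : k i' ∈ part i' ∩ part i := ⟨hkmem i', h1a⟩
            rw [hpartdisj i' i hii] at this; exact this
      · have hdisj : Disjoint B (G i) := by
          rw [Finset.disjoint_left]
          intro m hmB hmG
          have : m ∈ (↑B ∩ T : Set ℕ) := ⟨hmB, hpartT i (hGsub i hmG).1⟩
          rw [hBT] at this; exact this
        rw [Finset.sum_union hdisj]
        have := hGsum i
        linarith
  -- iterate
  have hiter : ∀ r : ℕ, ∃ T : Set ℕ, T.Infinite ∧
      ∀ k ∈ T, ∃ B : Finset ℕ, (↑B ∩ T : Set ℕ) = ∅ ∧ (r : ℝ) * ε ≤ ∑ j ∈ B, A k j := by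
    intro r
    induction r with
    | zero =>
      exact ⟨Set.univ, Set.infinite_univ, fun k _ => ⟨∅, by simp, by simp⟩⟩
    | succ n ih =>
      obtain ⟨T, hT, hinv⟩ := ih
      obtain ⟨T', _, hT', hinv'⟩ := step n T hT hinv
      refine ⟨T', hT', ?_⟩
      intro k hk
      obtain ⟨B, hB1, hB2⟩ := hinv' k hk
      exact ⟨B, hB1, by push_cast; linarith⟩
  obtain ⟨r, hr⟩ := exists_nat_gt (M / ε)
  have hrM : M < (r : ℝ) * ε := by
    rw [div_lt_iff₀ hε] at hr; linarith
  obtain ⟨T, hT, hinv⟩ := hiter r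
  obtain ⟨k, hk⟩ := hT.nonempty
  obtain ⟨B, _, hB2⟩ := hinv k hk
  have := hM k B
  linarith

variable {Y : Type*} [NormedAddCommGroup Y] [NormedSpace ℝ Y]


lemma wuc_bound (x : ℕ → Y) (hwuC : ∀ f : Y →L[ℝ] ℝ, Summable fun n => |f (x n)|) :
    ∃ M : ℝ, 0 ≤ M ∧ ∀ f : Y →L[ℝ] ℝ, ∀ F : Finset ℕ, ∑ n ∈ F, |f (x n)| ≤ M * ‖f‖ := by
  set g : (Finset ℕ × (ℕ → Bool)) → StrongDual ℝ (StrongDual ℝ Y) :=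
    fun p => NormedSpace.inclusionInDoubleDual ℝ Y
      (∑ n ∈ p.1, (if p.2 n then (1:ℝ) else -1) • x n) with hg
  have hpt : ∀ f : Y →L[ℝ] ℝ, ∃ C, ∀ p, ‖g p f‖ ≤ C := by
    intro f
    refine ⟨∑' n, |f (x n)|, ?_⟩
    rintro ⟨F, s⟩
    have : g (F, s) f = ∑ n ∈ F, (if s n then (1:ℝ) else -1) * f (x n) := by
      rw [hg]
      simp only [map_sum, map_smul, ContinuousLinearMap.sum_apply, ContinuousLinearMap.smul_apply, NormedSpace.dual_def, smul_eq_mul]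
    rw [this, Real.norm_eq_abs]
    calc |∑ n ∈ F, (if s n then (1:ℝ) else -1) * f (x n)|
        ≤ ∑ n ∈ F, |(if s n then (1:ℝ) else -1) * f (x n)| := Finset.abs_sum_le_sum_abs _ _
      _ ≤ ∑ n ∈ F, |f (x n)| := by
          apply Finset.sum_le_sum; intro n _
          rw [abs_mul]
          rcases (by by_cases hs : s n <;> simp [hs] : |(if s n then (1:ℝ) else -1)| = 1) with h
          rw [h, one_mul]
      _ ≤ ∑' n, |f (x n)| := Summable.sum_le_tsum F (fun n _ => abs_nonneg _) (hwuC f)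
  obtain ⟨C, hC⟩ := banach_steinhaus hpt
  refine ⟨max C 0, le_max_right _ _, ?_⟩
  intro f F
  set s : ℕ → Bool := fun n => decide (0 ≤ f (x n)) with hs
  have key : ∑ n ∈ F, |f (x n)| = g (F, s) f := by
    rw [hg]
    simp only [map_sum, map_smul, ContinuousLinearMap.sum_apply, ContinuousLinearMap.smul_apply, NormedSpace.dual_def, smul_eq_mul]
    apply Finset.sum_congr rfl
    intro n _
    by_cases hfn : 0 ≤ f (x n)
    · simp [hs, hfn, abs_of_nonneg hfn]
    · simp [hs, hfn, abs_of_neg (lt_of_not_ge hfn)]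
  rw [key]
  calc g (F, s) f ≤ ‖g (F, s) f‖ := le_abs_self _
    _ ≤ ‖g (F, s)‖ * ‖f‖ := (g (F, s)).le_opNorm f
    _ ≤ max C 0 * ‖f‖ := by
        apply mul_le_mul_of_nonneg_right ((hC (F, s)).trans (le_max_left _ _)) (norm_nonneg _)

lemma coeff_bound (x : ℕ → Y) {M : ℝ}
    (hM : ∀ f : Y →L[ℝ] ℝ, ∀ F : Finset ℕ, ∑ n ∈ F, |f (x n)| ≤ M * ‖f‖)
    (hM0 : 0 ≤ M) (F : Finset ℕ) (c : ℕ → ℝ) {C : ℝ} (hC0 : 0 ≤ C)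
    (hc : ∀ n ∈ F, |c n| ≤ C) :
    ‖∑ n ∈ F, c n • x n‖ ≤ M * C := by
  apply NormedSpace.norm_le_dual_bound ℝ _ (by positivity)
  intro f
  rw [Real.norm_eq_abs, map_sum]
  calc |∑ n ∈ F, f (c n • x n)| ≤ ∑ n ∈ F, |f (c n • x n)| := Finset.abs_sum_le_sum_abs _ _
    _ ≤ ∑ n ∈ F, C * |f (x n)| := by
        apply Finset.sum_le_sum; intro n hn
        rw [map_smul, smul_eq_mul, abs_mul]
        exact mul_le_mul_of_nonneg_right (hc n hn) (abs_nonneg _)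
    _ = C * ∑ n ∈ F, |f (x n)| := by rw [Finset.mul_sum]
    _ ≤ C * (M * ‖f‖) := mul_le_mul_of_nonneg_left (hM f F) hC0
    _ = M * C * ‖f‖ := by ring


open Set Metric Bornology

variable {X : Type*} [NormedAddCommGroup X] [NormedSpace ℝ X] [CompleteSpace X]

open scoped ZeroAtInfty

end Aux

open scoped ZeroAtInfty

/-- Bessaga–Pełczyński: if `X` contains no copy of `c₀` and `∑ₙ xₙ` is weakly
unconditionally Cauchy, then for every choice of signs `θₙ ∈ {-1, 1}` the series `∑ₙ θₙ xₙ`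
converges in `X`. -/
theorem stmt10 (h : ¬ ContainsC0 X) (x : ℕ → X)
    (hwuC : ∀ f : X →L[ℝ] ℝ, Summable fun n => |f (x n)|) :
    ∀ θ : ℕ → ℝ, (∀ n, θ n = 1 ∨ θ n = -1) →
      ∃ s : X, Filter.Tendsto (fun N => ∑ n ∈ Finset.range N, θ n • x n)
        Filter.atTop (nhds s) := by
  intro θ hθ
  by_contra hnot
  obtain ⟨M, hM0, hM⟩ := wuc_bound x hwuC
  set u : ℕ → X := fun N => ∑ n ∈ Finset.range N, θ n • x n with hu
  have hθabs : ∀ n, |θ n| = 1 := by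
    intro n; rcases hθ n with h1 | h1 <;> rw [h1] <;> norm_num
  have hnc : ¬ CauchySeq u := fun hc => hnot (cauchySeq_tendsto_of_complete hc)
  rw [Metric.cauchySeq_iff] at hnc
  push_neg at hnc
  obtain ⟨ε, hε, hblk0⟩ := hnc
  have hdist : ∀ m n : ℕ, m < n →
      dist (u m) (u n) = ‖∑ i ∈ Finset.Ico m n, θ i • x i‖ := by
    intro m n hmn
    rw [dist_comm, dist_eq_norm, hu]
    simp only
    rw [Finset.sum_Ico_eq_sub _ (le_of_lt hmn)]
  have hblk : ∀ N, ∃ pr : ℕ × ℕ, N ≤ pr.1 ∧ pr.1 < pr.2 ∧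
      ε ≤ ‖∑ i ∈ Finset.Ico pr.1 pr.2, θ i • x i‖ := by
    intro N
    obtain ⟨m, hm, n, hn, hd⟩ := hblk0 N
    have hmn : m ≠ n := by
      rintro rfl; rw [dist_self] at hd; linarith
    rcases lt_or_gt_of_ne hmn with hlt | hlt
    · exact ⟨(m, n), hm, hlt, by rw [← hdist m n hlt]; exact hd⟩
    · exact ⟨(n, m), hn, hlt, by rw [← hdist n m hlt, dist_comm]; exact hd⟩
  choose p hp1 hp2 hp3 using hblk
  set q : ℕ → ℕ × ℕ := fun k => Nat.rec (motive := fun _ => ℕ × ℕ) (p 0) (fun _ pr => p pr.2) k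
    with hq
  set a : ℕ → ℕ := fun k => (q k).1 with ha
  set b : ℕ → ℕ := fun k => (q k).2 with hb
  have hqp : ∀ k, ∃ N, q k = p N := by
    intro k; cases k with
    | zero => exact ⟨0, rfl⟩
    | succ n => exact ⟨(q n).2, rfl⟩
  have hab : ∀ k, a k < b k := by
    intro k; obtain ⟨N, hN⟩ := hqp k
    show (q k).1 < (q k).2
    rw [hN]; exact hp2 N
  have hba : ∀ k, b k ≤ a (k + 1) := by
    intro k; exact hp1 (q k).2
  have hmono : ∀ k k', k < k' → b k ≤ a k' := by
    intro k k' hkk'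
    induction k' with
    | zero => omega
    | succ n ih =>
      rcases Nat.lt_succ_iff_lt_or_eq.mp hkk' with hlt | rfl
      · exact le_trans (ih hlt) (le_trans (le_of_lt (hab n)) (hba n))
      · exact hba k
  set I : ℕ → Finset ℕ := fun k => Finset.Ico (a k) (b k) with hI
  set z : ℕ → X := fun k => ∑ i ∈ I k, θ i • x i with hz
  have hznorm : ∀ k, ε ≤ ‖z k‖ := by
    intro k; obtain ⟨N, hN⟩ := hqp k
    rw [hz]; simp only [hI, ha, hb, hN]; exact hp3 N
  have hIdisj : ∀ k k', k ≠ k' → Disjoint (I k) (I k') := by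
    intro k k' hne
    rw [Finset.disjoint_left]
    intro i hi hi'
    simp only [hI, Finset.mem_Ico] at hi hi'
    rcases lt_or_gt_of_ne hne with hlt | hlt
    · have := hmono k k' hlt; omega
    · have := hmono k' k hlt; omega
  -- key: sums of |f (z j)| are bounded by M * ‖f‖
  have habs : ∀ (f : X →L[ℝ] ℝ) (G : Finset ℕ), ∑ j ∈ G, |f (z j)| ≤ M * ‖f‖ := by
    intro f G
    have h1 : ∀ j, |f (z j)| ≤ ∑ i ∈ I j, |f (x i)| := by
      intro j
      rw [hz]; simp only [map_sum, map_smul, smul_eq_mul]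
      refine (Finset.abs_sum_le_sum_abs _ _).trans ?_
      apply Finset.sum_le_sum; intro i _
      rw [abs_mul, hθabs, one_mul]
    calc ∑ j ∈ G, |f (z j)| ≤ ∑ j ∈ G, ∑ i ∈ I j, |f (x i)| :=
          Finset.sum_le_sum fun j _ => h1 j
      _ = ∑ i ∈ G.biUnion I, |f (x i)| := by
          rw [Finset.sum_biUnion]
          intro k _ k' _ hne
          exact hIdisj k k' hne
      _ ≤ M * ‖f‖ := hM f _
  -- norming functionals
  have hzne : ∀ k, z k ≠ 0 := by
    intro k hk; have := hznorm k; rw [hk, norm_zero] at this; linarith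
  have hf : ∀ k, ∃ g : X →L[ℝ] ℝ, ‖g‖ = 1 ∧ g (z k) = ‖z k‖ :=
    fun k => exists_dual_vector ℝ (z k) (norm_ne_zero_iff.mpr (hzne k))
  choose f hf1 hf2 using hf
  -- Rosenthal selection
  obtain ⟨S, hSinf, hSgood⟩ := rosenthal_matrix (fun k j => |f k (z j)|)
    (fun k j => abs_nonneg _) M
    (fun k G => by simpa [hf1 k] using habs (f k) G) (by positivity : (0:ℝ) < ε / 4)
  set e : ℕ → ℕ := fun j => (Set.Infinite.natEmbedding S hSinf j).1 with he
  have heinj : Function.Injective e := by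
    intro j j' hjj'
    exact (Set.Infinite.natEmbedding S hSinf).injective (Subtype.ext hjj')
  have heS : ∀ j, e j ∈ S := fun j => (Set.Infinite.natEmbedding S hSinf j).2
  set w : ℕ → X := fun j => z (e j) with hw
  set g : ℕ → (X →L[ℝ] ℝ) := fun j => f (e j) with hg
  -- upper bound on partial sums of w
  have hwabs : ∀ (φ : X →L[ℝ] ℝ) (J : Finset ℕ), ∑ j ∈ J, |φ (w j)| ≤ M * ‖φ‖ := by
    intro φ J
    have : ∑ j ∈ J, |φ (w j)| = ∑ m ∈ J.image e, |φ (z m)| := by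
      rw [Finset.sum_image (fun j _ j' _ hjj' => heinj hjj')]
    rw [this]; exact habs φ _
  have hup : ∀ (J : Finset ℕ) (c : ℕ → ℝ) (C : ℝ), 0 ≤ C → (∀ j ∈ J, |c j| ≤ C) →
      ‖∑ j ∈ J, c j • w j‖ ≤ M * C := by
    intro J c C hC0 hc
    apply NormedSpace.norm_le_dual_bound ℝ _ (by positivity)
    intro φ
    rw [Real.norm_eq_abs, map_sum]
    calc |∑ j ∈ J, φ (c j • w j)| ≤ ∑ j ∈ J, |φ (c j • w j)| := Finset.abs_sum_le_sum_abs _ _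
      _ ≤ ∑ j ∈ J, C * |φ (w j)| := by
          apply Finset.sum_le_sum; intro j hj
          rw [map_smul, smul_eq_mul, abs_mul]
          exact mul_le_mul_of_nonneg_right (hc j hj) (abs_nonneg _)
      _ = C * ∑ j ∈ J, |φ (w j)| := by rw [Finset.mul_sum]
      _ ≤ C * (M * ‖φ‖) := mul_le_mul_of_nonneg_left (hwabs φ J) hC0
      _ = M * C * ‖φ‖ := by ring
  -- lower bound estimate
  have hlow : ∀ (J : Finset ℕ) (c : ℕ → ℝ) (C : ℝ), 0 ≤ C → (∀ j, |c j| ≤ C) →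
      ∀ l ∈ J, |c l| * ε ≤ ‖∑ j ∈ J, c j • w j‖ + C * (ε / 4) := by
    intro J c C hC0 hc l hl
    set v := ∑ j ∈ J, c j • w j with hv
    have hsplit : g l v = c l * g l (w l) + ∑ j ∈ J.erase l, c j * g l (w j) := by
      rw [hv, map_sum]
      simp only [map_smul, smul_eq_mul]
      rw [← Finset.add_sum_erase _ _ hl]
    have herase : ∑ j ∈ J.erase l, |f (e l) (z (e j))| ≤ ε / 4 := by
      have himg : ((J.erase l).image e : Set ℕ) ⊆ S \ {e l} := by
        intro m hm
        simp only [Finset.coe_image, Set.mem_image, Finset.mem_coe, Finset.mem_erase] at hm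
        obtain ⟨j, ⟨hjne, _⟩, rfl⟩ := hm
        exact ⟨heS j, fun hcon => hjne (heinj hcon)⟩
      have := hSgood (e l) (heS l) ((J.erase l).image e) himg
      rwa [Finset.sum_image (fun j _ j' _ hjj' => heinj hjj')] at this
    have hcross : |∑ j ∈ J.erase l, c j * g l (w j)| ≤ C * (ε / 4) := by
      calc |∑ j ∈ J.erase l, c j * g l (w j)| ≤ ∑ j ∈ J.erase l, |c j * g l (w j)| :=
            Finset.abs_sum_le_sum_abs _ _
        _ ≤ ∑ j ∈ J.erase l, C * |g l (w j)| := by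
            apply Finset.sum_le_sum; intro j _
            rw [abs_mul]
            exact mul_le_mul_of_nonneg_right (hc j) (abs_nonneg _)
        _ = C * ∑ j ∈ J.erase l, |g l (w j)| := by rw [Finset.mul_sum]
        _ ≤ C * (ε / 4) := by
            apply mul_le_mul_of_nonneg_left _ hC0
            exact herase
    have hgv : |g l v| ≤ ‖v‖ := by
      calc |g l v| ≤ ‖g l‖ * ‖v‖ := (g l).le_opNorm v
        _ = ‖v‖ := by rw [hg]; simp only; rw [hf1]; ring
    have hmain : |c l| * ‖w l‖ ≤ ‖v‖ + C * (ε / 4) := by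
      have h1 : |c l * g l (w l)| = |c l| * ‖w l‖ := by
        rw [abs_mul, hg, hw]
        simp only
        rw [hf2, abs_of_nonneg (norm_nonneg _)]
      have h2 : c l * g l (w l) = g l v - ∑ j ∈ J.erase l, c j * g l (w j) := by
        rw [hsplit]; ring
      calc |c l| * ‖w l‖ = |c l * g l (w l)| := h1.symm
        _ = |g l v - ∑ j ∈ J.erase l, c j * g l (w j)| := by rw [h2]
        _ ≤ |g l v| + |∑ j ∈ J.erase l, c j * g l (w j)| := abs_sub _ _
        _ ≤ ‖v‖ + C * (ε / 4) := add_le_add hgv hcross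
    have := hznorm (e l)
    have hwl : ε ≤ ‖w l‖ := by rw [hw]; exact this
    calc |c l| * ε ≤ |c l| * ‖w l‖ := mul_le_mul_of_nonneg_left hwl (abs_nonneg _)
      _ ≤ ‖v‖ + C * (ε / 4) := hmain
  -- norm facts about c₀
  have hc0norm : ∀ (ζ : C₀(ℕ, ℝ)) (j : ℕ), |ζ j| ≤ ‖ζ‖ := by
    intro ζ j
    rw [← ZeroAtInftyContinuousMap.norm_toBCF_eq_norm]
    exact ζ.toBCF.norm_coe_le_norm j
  -- summability
  have hzsum : ∀ ζ : C₀(ℕ, ℝ), Summable (fun j => (ζ j : ℝ) • w j) := by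
    intro ζ
    rw [summable_iff_vanishing]
    intro s hs
    obtain ⟨δ, hδ, hball⟩ := Metric.mem_nhds_iff.mp hs
    have htend : Filter.Tendsto (fun j => (ζ j : ℝ)) Filter.atTop (nhds 0) := by
      have := zero_at_infty ζ
      rwa [cocompact_eq_atTop] at this
    have hev : ∀ᶠ j in Filter.atTop, |(ζ j : ℝ)| < δ / (2 * (M + 1)) := by
      have hpos : 0 < δ / (2 * (M + 1)) := by positivity
      have := htend (Metric.ball_mem_nhds 0 hpos)
      simpa [Real.dist_eq] using this
    obtain ⟨N, hN⟩ := Filter.eventually_atTop.mp hev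
    refine ⟨Finset.range N, fun t ht => ?_⟩
    apply hball
    rw [Metric.mem_ball, dist_zero_right]
    have hbound : ‖∑ j ∈ t, (ζ j : ℝ) • w j‖ ≤ M * (δ / (2 * (M + 1))) := by
      apply hup t _ _ (by positivity)
      intro j hj
      have hjN : N ≤ j := by
        by_contra hcon
        push_neg at hcon
        have : j ∈ Finset.range N := Finset.mem_range.mpr hcon
        exact (Finset.disjoint_left.mp ht hj) this
      exact le_of_lt (hN j hjN)
    calc ‖∑ j ∈ t, (ζ j : ℝ) • w j‖ ≤ M * (δ / (2 * (M + 1))) := hbound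
      _ = (M / (2 * (M + 1))) * δ := by ring
      _ < 1 * δ := by
          apply mul_lt_mul_of_pos_right _ hδ
          rw [div_lt_one (by linarith)]
          linarith
      _ = δ := one_mul δ
  -- the operator
  set Tfun : C₀(ℕ, ℝ) → X := fun ζ => ∑' j, (ζ j : ℝ) • w j with hTfun
  have hTbound : ∀ ζ : C₀(ℕ, ℝ), ‖Tfun ζ‖ ≤ M * ‖ζ‖ := by
    intro ζ
    have hhs := (hzsum ζ).hasSum
    refine le_of_tendsto hhs.norm (Filter.Eventually.of_forall fun s => ?_)
    exact hup s _ _ (norm_nonneg ζ) (fun j _ => hc0norm ζ j)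
  have hTadd : ∀ ζ η : C₀(ℕ, ℝ), Tfun (ζ + η) = Tfun ζ + Tfun η := by
    intro ζ η
    rw [hTfun]
    simp only
    rw [← Summable.tsum_add (hzsum ζ) (hzsum η)]
    apply tsum_congr; intro j
    have : ((ζ + η) j : ℝ) = ζ j + η j := rfl
    rw [this, add_smul]
  have hTsmul : ∀ (c : ℝ) (ζ : C₀(ℕ, ℝ)), Tfun (c • ζ) = c • Tfun ζ := by
    intro c ζ
    have h1 : HasSum (fun j => c • ((ζ j : ℝ) • w j)) (c • Tfun ζ) :=
      (hzsum ζ).hasSum.const_smul c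
    have h2 : (fun j => ((c • ζ) j : ℝ) • w j) = fun j => c • ((ζ j : ℝ) • w j) := by
      funext j
      have : ((c • ζ) j : ℝ) = c * ζ j := rfl
      rw [this, smul_smul]
    rw [hTfun]
    simp only
    rw [h2]
    exact h1.tsum_eq
  set Tlin : C₀(ℕ, ℝ) →ₗ[ℝ] X :=
    { toFun := Tfun, map_add' := hTadd, map_smul' := hTsmul } with hTlin
  set T : C₀(ℕ, ℝ) →L[ℝ] X := Tlin.mkContinuous M hTbound with hT
  have hTapp : ∀ ζ, T ζ = Tfun ζ := fun ζ => rfl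
  have hTlow : ∀ ζ : C₀(ℕ, ℝ), (3 * ε / 4) * ‖ζ‖ ≤ ‖T ζ‖ := by
    intro ζ
    rw [hTapp]
    have hpart : Filter.Tendsto (fun N => ‖∑ j ∈ Finset.range N, (ζ j : ℝ) • w j‖)
        Filter.atTop (nhds ‖Tfun ζ‖) := (hzsum ζ).hasSum.tendsto_sum_nat.norm
    have hl : ∀ l : ℕ, |(ζ l : ℝ)| * ε ≤ ‖Tfun ζ‖ + ‖ζ‖ * (ε / 4) := by
      intro l
      have hev : ∀ᶠ N in Filter.atTop, |(ζ l : ℝ)| * ε ≤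
          ‖∑ j ∈ Finset.range N, (ζ j : ℝ) • w j‖ + ‖ζ‖ * (ε / 4) := by
        filter_upwards [Filter.eventually_ge_atTop (l + 1)] with N hN
        exact hlow (Finset.range N) _ _ (norm_nonneg ζ) (fun j => hc0norm ζ j) l
          (Finset.mem_range.mpr (by omega))
      exact ge_of_tendsto (hpart.add_const _) hev
    have hnn : 0 ≤ (‖Tfun ζ‖ + ‖ζ‖ * (ε / 4)) / ε :=
      div_nonneg (by positivity) hε.le
    have hnorm : ‖ζ‖ ≤ (‖Tfun ζ‖ + ‖ζ‖ * (ε / 4)) / ε := by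
      have hb := (BoundedContinuousFunction.norm_le hnn).mpr
        (fun l => (le_div_iff₀ hε).mpr (hl l) : ∀ l, ‖ζ.toBCF l‖ ≤ (‖Tfun ζ‖ + ‖ζ‖ * (ε / 4)) / ε)
      calc ‖ζ‖ = ‖ζ.toBCF‖ := ZeroAtInftyContinuousMap.norm_toBCF_eq_norm.symm
        _ ≤ _ := hb
    rw [le_div_iff₀ hε] at hnorm
    linarith
  exact h ⟨T, 3 * ε / 4, by linarith, hTlow⟩
end

section
/- Let X be a real Banach space and A ⊆ X a bounded set. If δ₁(A) > ε > 0, then A contains a 2ε-tree, i.e., there is a sequence (xₙ)_{n∈ℕ} in A with xₙ = (x_{2n} + x_{2n+1})/2 and ‖x_{2n} − x_{2n+1}‖ ≥ 2ε for every n ∈ ℕ. -/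
open Set Metric Bornology

variable {X : Type*} [NormedAddCommGroup X] [NormedSpace ℝ X] [CompleteSpace X]

/-- An `ε`-tree in `A`: a sequence `(xₙ)_{n ≥ 1}` in `A` with `xₙ = (x_{2n} + x_{2n+1})/2` and
`‖x_{2n} - x_{2n+1}‖ ≥ ε` for every `n ≥ 1`. -/
def IsTree (ε : ℝ) (A : Set X) (x : ℕ → X) : Prop :=
  (∀ n, 1 ≤ n → x n ∈ A) ∧
  ∀ n, 1 ≤ n →
    x n = (2⁻¹ : ℝ) • (x (2 * n) + x (2 * n + 1)) ∧ ε ≤ ‖x (2 * n) - x (2 * n + 1)‖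

/-- Auxiliary tree-building function: `g` sends a point to its pair of children. -/
noncomputable def treeAux {Y : Type*} (g : Y → Y × Y) (a : Y) : ℕ → Y
  | 0 => a
  | 1 => a
  | n + 2 =>
    if (n + 2) % 2 = 0 then (g (treeAux g a ((n + 2) / 2))).1
    else (g (treeAux g a ((n + 2) / 2))).2
  decreasing_by all_goals omega

lemma treeAux_two_mul {Y : Type*} (g : Y → Y × Y) (a : Y) (n : ℕ) (hn : 1 ≤ n) :
    treeAux g a (2 * n) = (g (treeAux g a n)).1 := by
  obtain ⟨m, rfl⟩ : ∃ m, n = m + 1 := ⟨n - 1, by omega⟩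
  rw [show 2 * (m + 1) = 2 * m + 2 from by ring, treeAux]
  rw [if_pos (by omega), show (2 * m + 2) / 2 = m + 1 from by omega]

lemma treeAux_two_mul_add_one {Y : Type*} (g : Y → Y × Y) (a : Y) (n : ℕ) (hn : 1 ≤ n) :
    treeAux g a (2 * n + 1) = (g (treeAux g a n)).2 := by
  obtain ⟨m, rfl⟩ : ∃ m, n = m + 1 := ⟨n - 1, by omega⟩
  rw [show 2 * (m + 1) + 1 = (2 * m + 1) + 2 from by ring, treeAux]
  rw [if_neg (by omega), show ((2 * m + 1) + 2) / 2 = m + 1 from by omega]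

/-- if `δ₁(A) > ε > 0`, then `A` contains a `2ε`-tree. -/
theorem stmt12 (A : Set X) (hA : IsBounded A) (ε : ℝ) (hε : 0 < ε)
    (h : ε < deltaN A 1) :
    ∃ x : ℕ → X, IsTree (2 * ε) A x := by
  classical
  -- Step 1: every point of A admits a symmetric pair of far-apart children.
  have H : ∀ a ∈ A, ∃ d : X, a + d ∈ A ∧ a - d ∈ A ∧ ε ≤ ‖d‖ := by
    intro a ha
    have hmem : delta0 (symmAt A a) ∈ delta0 '' DeltaFam A 1 := by
      refine ⟨symmAt A a, ⟨fun _ => a, fun _ => ha, ?_⟩, rfl⟩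
      simp [symmSet, iInter_const]
    have hbdd : BddBelow (delta0 '' DeltaFam A 1) := by
      refine ⟨0, ?_⟩
      rintro y ⟨D, -, rfl⟩
      exact div_nonneg diam_nonneg (by norm_num)
    have h2 : ε < delta0 (symmAt A a) := lt_of_lt_of_le h (csInf_le hbdd hmem)
    have h3 : 2 * ε < diam (symmAt A a) := by
      unfold delta0 at h2; linarith
    have h4 : ¬ ∀ d₁ ∈ symmAt A a, ∀ d₂ ∈ symmAt A a, dist d₁ d₂ ≤ 2 * ε := by
      intro hall
      exact absurd (diam_le_of_forall_dist_le (by linarith) hall) (not_le.2 h3)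
    push_neg at h4
    obtain ⟨d₁, hd₁, d₂, hd₂, hdist⟩ := h4
    rw [dist_eq_norm] at hdist
    rcases le_or_gt ε ‖d₁‖ with h5 | h5
    · exact ⟨d₁, hd₁.1, hd₁.2, h5⟩
    · refine ⟨d₂, hd₂.1, hd₂.2, ?_⟩
      have := norm_sub_le d₁ d₂
      linarith
  -- A is nonempty
  have hAne : A.Nonempty := by
    by_contra hne
    rw [not_nonempty_iff_eq_empty] at hne
    have : DeltaFam A 1 = (∅ : Set (Set X)) := by
      ext D
      simp only [DeltaFam, mem_setOf_eq, mem_empty_iff_false, iff_false]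
      rintro ⟨x, hx, -⟩
      exact absurd (hx 0) (by simp [hne])
    have : deltaN A 1 = 0 := by
      unfold deltaN; rw [this]; simp [Real.sInf_empty]
    linarith [h, hε, this ▸ h]
  obtain ⟨a₀, ha₀⟩ := hAne
  -- the children function
  set g : X → X × X := fun a =>
    if ha : a ∈ A then ((a + (H a ha).choose), (a - (H a ha).choose)) else (a, a) with hg
  have hg1 : ∀ a ∈ A, (g a).1 ∈ A := by
    intro a ha; simp only [hg, dif_pos ha]; exact (H a ha).choose_spec.1
  have hg2 : ∀ a ∈ A, (g a).2 ∈ A := by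
    intro a ha; simp only [hg, dif_pos ha]; exact (H a ha).choose_spec.2.1
  have hgsum : ∀ a ∈ A, (g a).1 + (g a).2 = a + a := by
    intro a ha; simp only [hg, dif_pos ha]; abel
  have hgnorm : ∀ a ∈ A, 2 * ε ≤ ‖(g a).1 - (g a).2‖ := by
    intro a ha
    simp only [hg, dif_pos ha]
    have : (a + (H a ha).choose) - (a - (H a ha).choose)
        = (H a ha).choose + (H a ha).choose := by abel
    rw [this]
    calc 2 * ε ≤ 2 * ‖(H a ha).choose‖ := by
          have := (H a ha).choose_spec.2.2; linarith
      _ = ‖(H a ha).choose + (H a ha).choose‖ := by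
          rw [← two_smul ℝ, norm_smul]; simp
  refine ⟨treeAux g a₀, ?_, ?_⟩
  · -- membership
    intro n
    induction n using Nat.strong_induction_on with
    | _ n ih =>
      intro hn
      rcases eq_or_lt_of_le hn with h1 | h1
      · rw [← h1]; show treeAux g a₀ 1 ∈ A; rw [treeAux]; exact ha₀
      · have h2 : 2 ≤ n := h1
        have hm : 1 ≤ n / 2 := by omega
        have hmlt : n / 2 < n := by omega
        have hmA : treeAux g a₀ (n / 2) ∈ A := ih _ hmlt hm
        rcases Nat.even_or_odd n with ⟨m, hmeq⟩ | ⟨m, hmeq⟩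
        · have : n = 2 * (n / 2) := by omega
          rw [this, treeAux_two_mul g a₀ _ hm]
          exact hg1 _ hmA
        · have : n = 2 * (n / 2) + 1 := by omega
          rw [this, treeAux_two_mul_add_one g a₀ _ hm]
          exact hg2 _ hmA
  · -- tree property
    intro n hn
    have hmA : treeAux g a₀ n ∈ A := by
      -- reprove membership for this n via the same induction packaged above;
      -- simpler: a separate induction
      induction n using Nat.strong_induction_on with
      | _ n ih =>
        rcases eq_or_lt_of_le hn with h1 | h1
        · rw [← h1]; show treeAux g a₀ 1 ∈ A; rw [treeAux]; exact ha₀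
        · have h2 : 2 ≤ n := h1
          have hm : 1 ≤ n / 2 := by omega
          have hmlt : n / 2 < n := by omega
          have hmA : treeAux g a₀ (n / 2) ∈ A := ih _ hmlt hm
          rcases Nat.even_or_odd n with ⟨m, hmeq⟩ | ⟨m, hmeq⟩
          · have : n = 2 * (n / 2) := by omega
            rw [this, treeAux_two_mul g a₀ _ hm]
            exact hg1 _ hmA
          · have : n = 2 * (n / 2) + 1 := by omega
            rw [this, treeAux_two_mul_add_one g a₀ _ hm]
            exact hg2 _ hmA
    rw [treeAux_two_mul g a₀ n hn, treeAux_two_mul_add_one g a₀ n hn]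
    constructor
    · rw [hgsum _ hmA, ← two_smul ℝ, smul_smul]
      norm_num
    · exact hgnorm _ hmA
end

section
/- Let X be a real Banach space and let A' ⊆ X be the set of points of an ε-tree in X (ε > 0). Then δ₁(A') ≥ ε/2. -/
open Set Metric Bornology

variable {X : Type*} [NormedAddCommGroup X] [NormedSpace ℝ X] [CompleteSpace X]

open Pointwise

/-- if `A'` is the set of points of an `ε`-tree in `X` (and is bounded, so that
`δ₁(A')` makes sense), then `δ₁(A') ≥ ε/2`. -/
theorem stmt13 (ε : ℝ) (hε : 0 < ε) (x : ℕ → X)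
    (hx : IsTree ε (Set.univ : Set X) x)
    (A' : Set X) (hA' : A' = x '' Set.Ici 1) (hbdd : IsBounded A') :
    ε / 2 ≤ deltaN A' 1 := by
  have hx1 : x 1 ∈ A' := by
    rw [hA']; exact ⟨1, Set.mem_Ici.2 le_rfl, rfl⟩
  apply le_csInf
  · exact ⟨delta0 (symmSet A' (fun _ : Fin 1 => x 1)),
      ⟨symmSet A' (fun _ : Fin 1 => x 1), ⟨fun _ => x 1, fun _ => hx1, rfl⟩, rfl⟩⟩
  · rintro b ⟨D, ⟨xs, hxs, rfl⟩, rfl⟩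
    -- the point xs 0 is in A', hence equals some x k with k ≥ 1
    obtain ⟨k, hk, hxk⟩ : ∃ k, 1 ≤ k ∧ x k = xs 0 := by
      have := hxs 0; rw [hA'] at this; obtain ⟨k, hk, hk'⟩ := this; exact ⟨k, hk, hk'⟩
    obtain ⟨heq, hnorm⟩ := hx.2 k hk
    set y := xs 0 with hy
    set d : X := x (2 * k) - x k with hd
    have h1 : y + d = x (2 * k) := by rw [← hxk, hd]; abel
    have h2 : y - d = x (2 * k + 1) := by
      rw [← hxk, hd, heq]; module
    have hmem1 : x (2 * k) ∈ A' := by rw [hA']; exact ⟨2 * k, Set.mem_Ici.2 (by omega), rfl⟩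
    have hmem2 : x (2 * k + 1) ∈ A' := by rw [hA']; exact ⟨2 * k + 1, Set.mem_Ici.2 (by omega), rfl⟩
    have hdD : d ∈ symmSet A' xs := by
      intro S hS
      simp only [Set.mem_range] at hS
      obtain ⟨i, rfl⟩ := hS
      have : xs i = y := by rw [hy, Subsingleton.elim i 0]
      rw [this]
      exact ⟨h1 ▸ hmem1, h2 ▸ hmem2⟩
    have hdD' : -d ∈ symmSet A' xs := by
      intro S hS
      simp only [Set.mem_range] at hS
      obtain ⟨i, rfl⟩ := hS
      have : xs i = y := by rw [hy, Subsingleton.elim i 0]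
      rw [this]
      constructor
      · have : y + -d = x (2 * k + 1) := by rw [← h2]; abel
        exact this ▸ hmem2
      · have : y - -d = x (2 * k) := by rw [← h1]; abel
        exact this ▸ hmem1
    have hsub : symmSet A' xs ⊆ A' - {y} := by
      intro d' hd'
      have hm := hd' (symmAt A' (xs 0)) ⟨0, rfl⟩
      have hrw : d' = (y + d') - y := by abel
      rw [hrw]
      exact Set.sub_mem_sub hm.1 (Set.mem_singleton y)
    have hDbdd : IsBounded (symmSet A' xs) :=
      (hbdd.sub isBounded_singleton).subset hsub
    have hdist : ε ≤ dist d (-d) := by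
      rw [dist_eq_norm]
      have : d - -d = x (2 * k) - x (2 * k + 1) := by
        rw [hd, heq]; module
      rw [this]; exact hnorm
    have hdiam : ε ≤ diam (symmSet A' xs) :=
      le_trans hdist (dist_le_diam_of_mem hDbdd hdD hdD')
    unfold delta0
    linarith
end

section
/- Let X be a real Banach space and A ⊆ X a bounded set. Then A contains no ε-tree for any ε > 0 if and only if δ₁(A') = 0 for every subset A' ⊆ A. -/
open Set Metric Bornology
open Pointwise

variable {X : Type*} [NormedAddCommGroup X] [NormedSpace ℝ X] [CompleteSpace X]

lemma symmSet_const (A : Set X) (c : X) : symmSet A (fun _ : Fin 1 => c) = symmAt A c := by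
  simp [symmSet, iInter_const]

lemma symmSet_fin_one (A : Set X) (c : Fin 1 → X) : symmSet A c = symmAt A (c 0) := by
  have hc : c = fun _ : Fin 1 => c 0 := funext fun i => by rw [Subsingleton.elim i 0]
  rw [hc]; exact symmSet_const A (c 0)

noncomputable def treeSeq (g : X → X × X) (a : X) : ℕ → X
  | 0 => a
  | 1 => a
  | n + 2 =>
    if (n + 2) % 2 = 0 then (g (treeSeq g a ((n + 2) / 2))).1
    else (g (treeSeq g a ((n + 2) / 2))).2
  decreasing_by all_goals exact Nat.div_lt_self (by omega) (by omega)

theorem treeSeq_eq (g : X → X × X) (a : X) (m : ℕ) (hm : 2 ≤ m) :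
    treeSeq g a m = if m % 2 = 0 then (g (treeSeq g a (m / 2))).1
      else (g (treeSeq g a (m / 2))).2 := by
  rw [show m = (m - 2) + 2 by omega, treeSeq]

/-- a bounded set `A` contains no `ε`-tree for any `ε > 0` iff `δ₁(A') = 0` for
every subset `A' ⊆ A`. -/
theorem stmt14 (A : Set X) (hA : IsBounded A) :
    (∀ ε : ℝ, 0 < ε → ¬ ∃ x : ℕ → X, IsTree ε A x) ↔
      ∀ A' : Set X, A' ⊆ A → deltaN A' 1 = 0 := by
  constructor
  · intro h A' hA'
    by_cases hne : A'.Nonempty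
    · -- nonempty case
      obtain ⟨a0, ha0⟩ := hne
      set δ := deltaN A' 1 with hδdef
      have hS : (delta0 '' DeltaFam A' 1).Nonempty := by
        exact ⟨delta0 (symmAt A' a0), ⟨symmAt A' a0,
          ⟨fun _ => a0, fun _ => ha0, (symmSet_const A' a0).symm⟩, rfl⟩⟩
      have hbdd : BddBelow (delta0 '' DeltaFam A' 1) := by
        refine ⟨0, fun v hv => ?_⟩
        obtain ⟨D, _, rfl⟩ := hv
        exact div_nonneg diam_nonneg (by norm_num)
      have hδ0 : 0 ≤ δ := by
        apply Real.sInf_nonneg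
        rintro v ⟨D, _, rfl⟩
        exact div_nonneg diam_nonneg (by norm_num)
      rcases eq_or_lt_of_le hδ0 with heq | hpos
      · exact heq.symm
      · exfalso
        -- for each a ∈ A', find witnesses
        have key : ∀ a : X, ∃ p : X × X, a ∈ A' →
            p.1 ∈ A' ∧ p.2 ∈ A' ∧ a = (2⁻¹ : ℝ) • (p.1 + p.2) ∧ δ ≤ ‖p.1 - p.2‖ := by
          intro a
          by_cases ha : a ∈ A'
          · have hmem : delta0 (symmAt A' a) ∈ delta0 '' DeltaFam A' 1 :=
              ⟨symmAt A' a, ⟨fun _ => a, fun _ => ha, (symmSet_const A' a).symm⟩, rfl⟩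
            have hle : δ ≤ delta0 (symmAt A' a) := csInf_le hbdd hmem
            have hdiam : δ < diam (symmAt A' a) := by
              unfold delta0 at hle; linarith
            obtain ⟨d1, hd1, d2, hd2, hdist⟩ : ∃ d1 ∈ symmAt A' a, ∃ d2 ∈ symmAt A' a,
                dist d1 d2 > δ := by
              by_contra hc
              push_neg at hc
              have := diam_le_of_forall_dist_le hδ0
                (fun x hx y hy => hc x hx y hy)
              linarith
            rw [dist_eq_norm] at hdist
            -- one of d1, d2 has norm > δ/2
            have : ‖d1‖ > δ/2 ∨ ‖d2‖ > δ/2 := by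
              by_contra hc
              push_neg at hc
              have := norm_sub_le d1 d2
              linarith [hc.1, hc.2]
            obtain ⟨e, he, hne⟩ : ∃ e ∈ symmAt A' a, ‖e‖ > δ/2 := by
              rcases this with h1 | h1
              · exact ⟨d1, hd1, h1⟩
              · exact ⟨d2, hd2, h1⟩
            refine ⟨(a + e, a - e), fun _ => ⟨he.1, he.2, ?_, ?_⟩⟩
            · have : a + e + (a - e) = (2 : ℝ) • a := by
                rw [two_smul]; abel
              rw [this, smul_smul]; norm_num
            · have : a + e - (a - e) = (2 : ℝ) • e := by
                rw [two_smul]; abel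
              rw [this, norm_smul]
              simp only [Real.norm_ofNat]
              linarith
          · exact ⟨(a, a), fun h' => absurd h' ha⟩
        choose g hg using key
        have hmem : ∀ n, 1 ≤ n → treeSeq g a0 n ∈ A' := by
          intro n
          induction n using Nat.strong_induction_on with
          | _ n ih =>
            intro hn
            rcases Nat.lt_or_ge n 2 with h2 | h2
            · interval_cases n
              · simpa [treeSeq] using ha0
            · rw [treeSeq_eq g a0 n h2]
              have hhalf : 1 ≤ n / 2 := by omega
              have hm : treeSeq g a0 (n / 2) ∈ A' :=
                ih (n / 2) (Nat.div_lt_self (by omega) (by omega)) hhalf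
              rcases (hg _ hm) with ⟨h1, h2', _, _⟩
              split <;> assumption
        have htree : IsTree δ A (treeSeq g a0) := by
          constructor
          · intro n hn; exact hA' (hmem n hn)
          · intro n hn
            have hx2n : treeSeq g a0 (2 * n) = (g (treeSeq g a0 n)).1 := by
              rw [treeSeq_eq g a0 (2 * n) (by omega)]
              rw [if_pos (by omega), Nat.mul_div_cancel_left n (by omega)]
            have hx2n1 : treeSeq g a0 (2 * n + 1) = (g (treeSeq g a0 n)).2 := by
              rw [treeSeq_eq g a0 (2 * n + 1) (by omega)]
              rw [if_neg (by omega), show (2 * n + 1) / 2 = n by omega]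
            rcases hg _ (hmem n hn) with ⟨_, _, hmid, hsep⟩
            rw [hx2n, hx2n1]
            exact ⟨hmid, hsep⟩
        exact h δ hpos ⟨treeSeq g a0, htree⟩
    · -- empty case
      rw [not_nonempty_iff_eq_empty] at hne
      subst hne
      have : DeltaFam (∅ : Set X) 1 = ∅ := by
        ext D
        simp only [DeltaFam, mem_setOf_eq, mem_empty_iff_false, iff_false]
        rintro ⟨x, hx, _⟩
        exact hx 0
      rw [deltaN, this, image_empty, Real.sInf_empty]
  · intro h ε hε ⟨x, hx⟩
    set A' : Set X := x '' {n | 1 ≤ n} with hA'def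
    have hsub : A' ⊆ A := by
      rintro _ ⟨n, hn, rfl⟩
      exact hx.1 n hn
    have hz := h A' hsub
    -- show deltaN A' 1 ≥ ε / 2 > 0
    have hlb : ∀ v ∈ delta0 '' DeltaFam A' 1, ε / 2 ≤ v := by
      rintro _ ⟨D, ⟨c, hc, rfl⟩, rfl⟩
      obtain ⟨n, hn, hcn⟩ := hc 0
      rw [symmSet_fin_one]
      rw [← hcn]
      obtain ⟨hmid, hsep⟩ := hx.2 n hn
      set u := x (2 * n) with hu
      set v := x (2 * n + 1) with hv
      set d := u - x n with hd
      have hn' : 1 ≤ n := hn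
      have h2 : u + v = x n + x n := by
        have h' := congrArg (fun y : X => (2 : ℝ) • y) hmid
        simp only [smul_smul] at h'
        norm_num at h'
        rw [← h', two_smul]
      have hvd : x n - d = v := by
        rw [hd]
        have : x n - (u - x n) = x n + x n - u := by abel
        rw [this, ← h2]; abel
      have hud : x n + d = u := by rw [hd]; abel
      have huA : u ∈ A' := ⟨2 * n, by simp only [mem_setOf_eq]; omega, rfl⟩
      have hvA : v ∈ A' := ⟨2 * n + 1, by simp only [mem_setOf_eq]; omega, rfl⟩
      clear_value u v
      have hdmem : d ∈ symmAt A' (x n) := ⟨by rw [hud]; exact huA, by rw [hvd]; exact hvA⟩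
      have hndmem : -d ∈ symmAt A' (x n) := by
        constructor
        · rw [show x n + -d = x n - d by abel, hvd]; exact hvA
        · rw [show x n - -d = x n + d by abel, hud]; exact huA
      have hbD : IsBounded (symmAt A' (x n)) := by
        have hsub2 : symmAt A' (x n) ⊆ A - {x n} := by
          rintro e ⟨he1, _⟩
          exact ⟨x n + e, hsub he1, x n, rfl, add_sub_cancel_left (x n) e⟩
        exact (hA.sub isBounded_singleton).subset hsub2
      have hdd : d - -d = u - v := by
        have h3 : v = x n + x n - u := by rw [← h2]; abel
        rw [hd, h3]; abel
      have hdist : ε ≤ dist d (-d) := by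
        rw [dist_eq_norm, hdd]; exact hsep
      have hdiam : ε ≤ diam (symmAt A' (x n)) :=
        le_trans hdist (dist_le_diam_of_mem hbD hdmem hndmem)
      unfold delta0
      linarith
    have hnemem : delta0 (symmSet A' (fun _ : Fin 1 => x 1)) ∈ delta0 '' DeltaFam A' 1 :=
      ⟨_, ⟨fun _ => x 1, fun _ => ⟨1, by simp, rfl⟩, rfl⟩, rfl⟩
    have : ε / 2 ≤ deltaN A' 1 := le_csInf ⟨_, hnemem⟩ hlb
    rw [hz] at this
    linarith
end
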